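/- arXiv:2405.13223 — 3 statements merged into one kernel-verified Lean document; each statement's English description precedes it below -/
import Mathlib

section
/- Let n ≥ 2 and let A_2(n;1) = (Z/2^n) ⋊ Z/2, where the nontrivial element of Z/2 acts on Z/2^n by inversion. Under the inflation map H^2(A_2(n;1), F_2) → H^2(A_2(n+1;1), F_2) induced by the natural surjection A_2(n+1;1) → A_2(n;1), every class of degree two fully decomposes: the image of every element of H^2(A_2(n;1), F_2) is a finite sum of cup products of two degree-one classes in H^1(A_2(n+1;1), F_2). -/
open groupCohomology

noncomputable abbrev trivRep (p : ℕ) (G : Type) [Group G] : Rep (ZMod p) G :=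
  Rep.trivial (ZMod p) G (ZMod p)

namespace Stmt15Aux

lemma mod_div_helper (M r s : ℕ) (hM : 0 < M) (hr : r < M) (hs : s ≤ 3) :
    (M * s + r) % (2 * M) / M = s % 2 := by
  have h1 : M * s + r = M * (s % 2) + r + s / 2 * (2 * M) := by
    conv_lhs => rw [← Nat.div_add_mod s 2]
    ring
  have h2 : M * (s % 2) + r < 2 * M := by
    have hle : s % 2 ≤ 1 := by omega
    have := Nat.mul_le_mul_left M hle
    omega
  rw [h1, Nat.add_mul_mod_self_right, Nat.mod_eq_of_lt h2, Nat.mul_add_div hM,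
    Nat.div_eq_of_lt hr]
  omega

lemma parity_add (M I₁ I₂ : ℕ) (hM : 0 < M) (h₁ : I₁ < 2 * M) (h₂ : I₂ < 2 * M) :
    ((I₁ % M + I₂ % M) / M) % 2 = (I₁ / M + I₂ / M + ((I₁ + I₂) % (2 * M)) / M) % 2 := by
  set i₁ := I₁ % M with hi₁def
  set ε₁ := I₁ / M with hε₁def
  set i₂ := I₂ % M with hi₂def
  set ε₂ := I₂ / M with hε₂def
  have e₁ : M * ε₁ + i₁ = I₁ := Nat.div_add_mod I₁ M
  have e₂ : M * ε₂ + i₂ = I₂ := Nat.div_add_mod I₂ M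
  have hi1 : i₁ < M := Nat.mod_lt _ hM
  have hi2 : i₂ < M := Nat.mod_lt _ hM
  have hε1 : ε₁ < 2 := (Nat.div_lt_iff_lt_mul hM).mpr h₁
  have hε2 : ε₂ < 2 := (Nat.div_lt_iff_lt_mul hM).mpr h₂
  set c := (i₁ + i₂) / M with hcdef
  have ec : M * c + (i₁ + i₂) % M = i₁ + i₂ := Nat.div_add_mod _ _
  have hr : (i₁ + i₂) % M < M := Nat.mod_lt _ hM
  have hc : c < 2 := (Nat.div_lt_iff_lt_mul hM).mpr (by omega)
  have hs : ε₁ + ε₂ + c ≤ 3 := by omega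
  have hdist : M * (ε₁ + ε₂ + c) = M * ε₁ + M * ε₂ + M * c := by ring
  have esum : I₁ + I₂ = M * (ε₁ + ε₂ + c) + (i₁ + i₂) % M := by omega
  rw [esum, mod_div_helper M _ _ hM hr hs]
  omega

lemma parity_sub (M I₁ I₂ : ℕ) (hM : 0 < M) (h₁ : I₁ < 2 * M) (h₂ : I₂ < 2 * M) :
    ((if I₂ % M ≤ I₁ % M then 0 else 1) : ℕ) % 2
      = (I₁ / M + I₂ / M + ((I₁ + 2 * M - I₂) % (2 * M)) / M) % 2 := by
  set i₁ := I₁ % M with hi₁def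
  set ε₁ := I₁ / M with hε₁def
  set i₂ := I₂ % M with hi₂def
  set ε₂ := I₂ / M with hε₂def
  have e₁ : M * ε₁ + i₁ = I₁ := Nat.div_add_mod I₁ M
  have e₂ : M * ε₂ + i₂ = I₂ := Nat.div_add_mod I₂ M
  have hi1 : i₁ < M := Nat.mod_lt _ hM
  have hi2 : i₂ < M := Nat.mod_lt _ hM
  have hε1 : ε₁ < 2 := (Nat.div_lt_iff_lt_mul hM).mpr h₁
  have hε2 : ε₂ < 2 := (Nat.div_lt_iff_lt_mul hM).mpr h₂
  clear_value i₁ ε₁ i₂ ε₂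
  rcases le_or_gt i₂ i₁ with h | h
  · rw [if_pos h]
    have hs : ε₁ + 2 - ε₂ ≤ 3 := by omega
    have heq : I₁ + 2 * M - I₂ = M * (ε₁ + 2 - ε₂) + (i₁ - i₂) := by
      interval_cases ε₁ <;> interval_cases ε₂ <;> omega
    have hr : i₁ - i₂ < M := by omega
    rw [heq, mod_div_helper M _ _ hM hr hs]
    omega
  · rw [if_neg (by omega)]
    have hs : ε₁ + 1 - ε₂ ≤ 3 := by omega
    have heq : I₁ + 2 * M - I₂ = M * (ε₁ + 1 - ε₂) + (i₁ + M - i₂) := by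
      interval_cases ε₁ <;> interval_cases ε₂ <;> omega
    have hr : i₁ + M - i₂ < M := by omega
    rw [heq, mod_div_helper M _ _ hM hr hs]
    omega

set_option maxHeartbeats 1000000 in
lemma final_lin : ∀ A c1 u v w ca cb cc P1 P2 P3 e1 e2 e3 : ZMod 2,
    P1 + P2 + (A + c1) = (u * v * ca + u * w * cc + (e1 + e2 + e3) * cb) + P3 →
    A = ca * u * v + cc * u * w
        + ((P2 + e2 * cb + c1) - (P3 + e3 * cb + c1) + (P1 + e1 * cb + c1)) := by decide

variable {E : Type} [Group E]

lemma zsq (z : ZMod 2 → E) (hz : ∀ α β, z α * z β = z (α + β)) (hz0 : z 0 = 1)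
    (α : ZMod 2) : z α * z α = 1 := by
  rw [hz]
  have : α + α = 0 := by revert α; decide
  rw [this, hz0]

lemma master (z : ZMod 2 → E) (Y X : E) (N : ℕ) (ca cb cc : ZMod 2)
    (hz : ∀ α β, z α * z β = z (α + β)) (hz0 : z 0 = 1)
    (hcen : ∀ α x, z α * x = x * z α)
    (hYN : Y ^ N = z cb) (hX2 : X ^ 2 = z ca) (hXY : X * Y = z cc * Y⁻¹ * X)
    (hN : 0 < N) (i j k l : ℕ) (hi : i < N) (hj : j < 2) (hk : k < N) (hl : l < 2) :
    (Y ^ i * X ^ j) * (Y ^ k * X ^ l) =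
      z ((j : ZMod 2) * (l : ZMod 2) * ca + (j : ZMod 2) * (k : ZMod 2) * cc
          + (if j = 0 then (((i + k) / N : ℕ) : ZMod 2) else if k ≤ i then 0 else 1) * cb)
        * (Y ^ (if j = 0 then (i + k) % N else if k ≤ i then i - k else i + N - k)
           * X ^ ((j + l) % 2)) := by
  have hswap : ∀ (α : ZMod 2) (x y : E), x * (z α * y) = z α * (x * y) := fun α x y => by
    rw [← mul_assoc, ← hcen, mul_assoc]
  have hcollect : ∀ (A B : ZMod 2) (P Q : E), (z A * P) * (z B * Q) = z (A + B) * (P * Q) := by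
    intro A B P Q
    rw [mul_assoc, hswap, ← mul_assoc, hz]
  have hXYk : ∀ m : ℕ, X * Y ^ m = z ((m : ZMod 2) * cc) * ((Y ^ m)⁻¹ * X) := by
    intro m
    induction m with
    | zero => simp [hz0]
    | succ m ih =>
      calc X * Y ^ (m + 1) = (X * Y ^ m) * Y := by rw [pow_succ, mul_assoc]
        _ = z (↑m * cc) * ((Y ^ m)⁻¹ * (X * Y)) := by rw [ih, mul_assoc, mul_assoc]
        _ = z (↑m * cc) * ((Y ^ m)⁻¹ * (z cc * (Y⁻¹ * X))) := by rw [hXY, mul_assoc]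
        _ = z (↑m * cc + cc) * ((Y ^ m)⁻¹ * (Y⁻¹ * X)) := by rw [hswap, ← mul_assoc, hz]
        _ = z ((↑(m + 1) : ZMod 2) * cc) * ((Y ^ (m + 1))⁻¹ * X) := by
            rw [pow_succ', mul_inv_rev, mul_assoc]
            congr 1
            push_cast
            ring
  have hYsplit : ∀ m : ℕ, m < 2 * N →
      Y ^ m = z (((m / N : ℕ) : ZMod 2) * cb) * Y ^ (m % N) := by
    intro m hm
    have hd := Nat.div_add_mod m N
    have hq : m / N < 2 := (Nat.div_lt_iff_lt_mul hN).mpr (by omega)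
    rcases Nat.le_one_iff_eq_zero_or_eq_one.mp (Nat.lt_succ_iff.mp hq) with h0 | h1
    · rw [h0] at hd ⊢
      have : m % N = m := by omega
      simp [this, hz0]
    · rw [h1] at hd ⊢
      have hmm : m = N + m % N := by omega
      calc Y ^ m = Y ^ (N + m % N) := by rw [← hmm]
        _ = Y ^ N * Y ^ (m % N) := pow_add Y N (m % N)
        _ = z cb * Y ^ (m % N) := by rw [hYN]
        _ = z (((1 : ℕ) : ZMod 2) * cb) * Y ^ (m % N) := by norm_num
  interval_cases j
  · -- j = 0
    have hl2 : (0 + l) % 2 = l := by omega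
    rw [hl2, pow_zero, mul_one, ← mul_assoc, ← pow_add, hYsplit (i + k) (by omega), mul_assoc]
    norm_num
  · -- j = 1
    have hYik : Y ^ i * (Y ^ k)⁻¹
        = z ((if k ≤ i then 0 else 1) * cb) * Y ^ (if k ≤ i then i - k else i + N - k) := by
      rcases le_or_gt k i with h | h
      · rw [if_pos h, if_pos h, zero_mul, hz0, one_mul, mul_inv_eq_iff_eq_mul, ← pow_add]
        congr 1
        omega
      · rw [if_neg (not_le.mpr h), if_neg (not_le.mpr h), one_mul, mul_inv_eq_iff_eq_mul,
          mul_assoc, ← pow_add, show i + N - k + k = i + N from by omega, pow_add, hYN,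
          ← hcen, ← mul_assoc, zsq z hz hz0, one_mul]
    have hX1l : X ^ (1 + l) = z ((l : ZMod 2) * ca) * X ^ ((1 + l) % 2) := by
      interval_cases l
      · simp [hz0]
      · norm_num [hX2]
    calc (Y ^ i * X ^ 1) * (Y ^ k * X ^ l)
        = Y ^ i * ((X * Y ^ k) * X ^ l) := by rw [pow_one]; group
      _ = Y ^ i * ((z ((k : ZMod 2) * cc) * ((Y ^ k)⁻¹ * X)) * X ^ l) := by rw [hXYk]
      _ = z ((k : ZMod 2) * cc) * ((Y ^ i * (Y ^ k)⁻¹) * X ^ (1 + l)) := by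
          rw [mul_assoc (z _), hswap]
          congr 1
          rw [pow_add, pow_one]
          group
      _ = z ((k : ZMod 2) * cc) * ((z ((if k ≤ i then 0 else 1) * cb)
            * Y ^ (if k ≤ i then i - k else i + N - k)) * (z ((l : ZMod 2) * ca)
            * X ^ ((1 + l) % 2))) := by rw [hYik, hX1l]
      _ = z ((k : ZMod 2) * cc + ((if k ≤ i then 0 else 1) * cb + (l : ZMod 2) * ca))
            * (Y ^ (if k ≤ i then i - k else i + N - k) * X ^ ((1 + l) % 2)) := by
          rw [hcollect, ← mul_assoc, hz]
      _ = _ := by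
          congr 2
          push_cast
          ring

def Ext {H : Type} (_f : H × H → ZMod 2) : Type := ZMod 2 × H

namespace Ext

variable {H : Type} [Group H] (f : H × H → ZMod 2)

def mk (α : ZMod 2) (h : H) : Ext f := (α, h)

def co {f : H × H → ZMod 2} (x : Ext f) : ZMod 2 := (show ZMod 2 × H from x).1

def el {f : H × H → ZMod 2} (x : Ext f) : H := (show ZMod 2 × H from x).2

lemma ext {x y : Ext f} (h1 : co x = co y) (h2 : el x = el y) : x = y :=
  Prod.ext h1 h2

def extMul : Mul (Ext f) :=
  ⟨fun x y => mk f (co x + co y + f (el x, el y)) (el x * el y)⟩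

def extOne : One (Ext f) := ⟨mk f 0 1⟩

def extInv : Inv (Ext f) :=
  ⟨fun x => mk f (co x + f ((el x)⁻¹, el x)) (el x)⁻¹⟩

def extGroup (hf : ∀ g h k : H, f (h, k) + f (g, h * k) = f (g * h, k) + f (g, h))
    (h1 : ∀ g, f (1, g) = 0) (h2 : ∀ g, f (g, 1) = 0) : Group (Ext f) :=
  letI := extMul f
  letI := extOne f
  letI := extInv f
  Group.ofLeftAxioms
    (fun x y w => by
      refine ext f ?_ ?_
      · show (co x + co y + f (el x, el y)) + co w + f (el x * el y, el w)
          = co x + (co y + co w + f (el y, el w)) + f (el x, el y * el w)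
        have lin : ∀ F1 F2 F3 F4 cx cy cw : ZMod 2, F3 + F4 = F2 + F1 →
            (cx + cy + F1) + cw + F2 = cx + (cy + cw + F3) + F4 := by decide
        exact lin _ _ _ _ _ _ _ (hf (el x) (el y) (el w))
      · exact mul_assoc _ _ _)
    (fun x => by
      refine ext f ?_ ?_
      · show (0 : ZMod 2) + co x + f (1, el x) = co x
        rw [h1]; ring
      · exact one_mul _)
    (fun x => by
      refine ext f ?_ ?_
      · show (co x + f ((el x)⁻¹, el x)) + co x + f ((el x)⁻¹, el x) = (0 : ZMod 2)
        have : ∀ t s : ZMod 2, (t + s) + t + s = 0 := by decide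
        exact this _ _
      · exact inv_mul_cancel _)

end Ext

end Stmt15Aux

set_option maxHeartbeats 2000000 in
/-- Under inflation along the natural surjection `A₂(n+1;1) → A₂(n;1)` (where
`A₂(n;1) = Z/2ⁿ ⋊ Z/2` with the inversion action), every degree-two cohomology class fully
decomposes: its image is, up to a coboundary, a finite sum of cup products of two degree-one
classes (i.e. homomorphisms into `F_2`). -/
theorem stmt15 (n : ℕ) (hn : 2 ≤ n)
    (φn : Multiplicative (ZMod 2) →* MulAut (Multiplicative (ZMod (2 ^ n))))
    (hφn : ∀ y, φn (Multiplicative.ofAdd 1) y = y⁻¹)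
    (φn1 : Multiplicative (ZMod 2) →* MulAut (Multiplicative (ZMod (2 ^ (n + 1)))))
    (hφn1 : ∀ y, φn1 (Multiplicative.ofAdd 1) y = y⁻¹)
    (π : (Multiplicative (ZMod (2 ^ (n + 1))) ⋊[φn1] Multiplicative (ZMod 2)) →*
         (Multiplicative (ZMod (2 ^ n)) ⋊[φn] Multiplicative (ZMod 2)))
    (hπ : ∀ x, π x =
      ⟨Multiplicative.ofAdd
          (ZMod.castHom (pow_dvd_pow 2 (Nat.le_succ n)) (ZMod (2 ^ n)) x.left.toAdd),
        x.right⟩) :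
    ∀ f : (Multiplicative (ZMod (2 ^ n)) ⋊[φn] Multiplicative (ZMod 2)) ×
          (Multiplicative (ZMod (2 ^ n)) ⋊[φn] Multiplicative (ZMod 2)) → ZMod 2,
      f ∈ cocycles₂ (trivRep 2 (Multiplicative (ZMod (2 ^ n)) ⋊[φn] Multiplicative (ZMod 2))) →
      ∃ (ℓ : ℕ)
        (χ ψ : Fin ℓ →
          (Multiplicative (ZMod (2 ^ (n + 1))) ⋊[φn1] Multiplicative (ZMod 2)) → ZMod 2),
        (∀ i, (∀ a b, χ i (a * b) = χ i a + χ i b) ∧ (∀ a b, ψ i (a * b) = ψ i a + ψ i b)) ∧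
        ∃ φ' : (Multiplicative (ZMod (2 ^ (n + 1))) ⋊[φn1] Multiplicative (ZMod 2)) → ZMod 2,
          (fun x : (Multiplicative (ZMod (2 ^ (n + 1))) ⋊[φn1] Multiplicative (ZMod 2)) ×
                   (Multiplicative (ZMod (2 ^ (n + 1))) ⋊[φn1] Multiplicative (ZMod 2)) =>
            f (π x.1, π x.2)) =
          (fun x => ∑ i, χ i x.1 * ψ i x.2) +
            (d₁₂ (trivRep 2 (Multiplicative (ZMod (2 ^ (n + 1))) ⋊[φn1] Multiplicative (ZMod 2)))).hom
              φ' := by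
  intro f hf
  have hNpos : 0 < 2 ^ n := pow_pos (by norm_num) n
  haveI : NeZero (2 ^ n) := ⟨hNpos.ne'⟩
  haveI : NeZero (2 ^ (n + 1)) := ⟨(pow_pos (by norm_num : (0:ℕ) < 2) (n+1)).ne'⟩
  have h2add : ∀ t : ZMod 2, t + t = 0 := by decide
  have hneg : ∀ t : ZMod 2, -t = t := by decide
  have hcases : ∀ t : Multiplicative (ZMod 2), t = 1 ∨ t = Multiplicative.ofAdd 1 := by
    intro t
    rcases (by decide : ∀ s : ZMod 2, s = 0 ∨ s = 1) (Multiplicative.toAdd t) with h | h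
    · left
      apply Multiplicative.toAdd.injective
      simpa using h
    · right
      apply Multiplicative.toAdd.injective
      simpa using h
  -- the cocycle identity, with trivial action
  have hρ : ∀ (g : Multiplicative (ZMod (2 ^ n)) ⋊[φn] Multiplicative (ZMod 2)) (v : ZMod 2),
      ((trivRep 2 (Multiplicative (ZMod (2 ^ n)) ⋊[φn] Multiplicative (ZMod 2))).ρ g) v = v :=
    fun _ _ => rfl
  have hcoc := (mem_cocycles₂_iff (A := trivRep 2 (Multiplicative (ZMod (2 ^ n)) ⋊[φn] Multiplicative (ZMod 2))) f).mp hf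
  simp only [hρ] at hcoc
  set f₀ : (Multiplicative (ZMod (2 ^ n)) ⋊[φn] Multiplicative (ZMod 2)) ×
      (Multiplicative (ZMod (2 ^ n)) ⋊[φn] Multiplicative (ZMod 2)) → ZMod 2 :=
    fun p => f p + f (1, 1) with hf₀def
  have hf₀app : ∀ p, f₀ p = f p + f (1, 1) := fun _ => rfl
  have hcoc₀ : ∀ g h k, f₀ (h, k) + f₀ (g, h * k) = f₀ (g * h, k) + f₀ (g, h) := by
    intro g h k
    have lin : ∀ A B C D c : ZMod 2, A + B = C + D →
        (C + c) + (D + c) = (A + c) + (B + c) := by decide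
    exact lin _ _ _ _ _ (hcoc g h k)
  have hone1 : ∀ g, f (1, g) = f (1, 1) := fun g =>
    cocycles₂_map_one_fst (⟨f, hf⟩ :
      cocycles₂ (trivRep 2 (Multiplicative (ZMod (2 ^ n)) ⋊[φn] Multiplicative (ZMod 2)))) g
  have hone2 : ∀ g, f (g, 1) = f (1, 1) := fun g =>
    cocycles₂_map_one_snd (⟨f, hf⟩ :
      cocycles₂ (trivRep 2 (Multiplicative (ZMod (2 ^ n)) ⋊[φn] Multiplicative (ZMod 2)))) g
  have h1₀ : ∀ g, f₀ (1, g) = 0 := fun g => by rw [hf₀app, hone1, h2add]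
  have h2₀ : ∀ g, f₀ (g, 1) = 0 := fun g => by rw [hf₀app, hone2, h2add]
  letI : Group (Stmt15Aux.Ext f₀) := Stmt15Aux.Ext.extGroup f₀ hcoc₀ h1₀ h2₀
  -- generators of H
  set YH : Multiplicative (ZMod (2 ^ n)) ⋊[φn] Multiplicative (ZMod 2) :=
    SemidirectProduct.inl (Multiplicative.ofAdd (1 : ZMod (2 ^ n))) with hYHdef
  set XH : Multiplicative (ZMod (2 ^ n)) ⋊[φn] Multiplicative (ZMod 2) :=
    SemidirectProduct.inr (Multiplicative.ofAdd (1 : ZMod 2)) with hXHdef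
  set iH : (Multiplicative (ZMod (2 ^ n)) ⋊[φn] Multiplicative (ZMod 2)) → ℕ :=
    fun g => (Multiplicative.toAdd g.left).val with hiHdef
  set jH : (Multiplicative (ZMod (2 ^ n)) ⋊[φn] Multiplicative (ZMod 2)) → ℕ :=
    fun g => (Multiplicative.toAdd g.right).val with hjHdef
  have hiHlt : ∀ g, iH g < 2 ^ n := fun g => ZMod.val_lt _
  have hjHlt : ∀ g, jH g < 2 := fun g => ZMod.val_lt _
  have hYHpow : ∀ m : ℕ,
      YH ^ m = SemidirectProduct.inl (Multiplicative.ofAdd ((m : ZMod (2 ^ n)))) := by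
    intro m
    rw [hYHdef, ← map_pow]
    congr 1
    apply Multiplicative.toAdd.injective
    simp [toAdd_pow, nsmul_eq_mul]
  have hXHpow : ∀ m : ℕ,
      XH ^ m = SemidirectProduct.inr (Multiplicative.ofAdd ((m : ZMod 2))) := by
    intro m
    rw [hXHdef, ← map_pow]
    congr 1
    apply Multiplicative.toAdd.injective
    simp [toAdd_pow, nsmul_eq_mul]
  have hYHN : YH ^ (2 ^ n) = 1 := by
    rw [hYHpow]
    simp
  have hXH2 : XH * XH = 1 := by
    rw [hXHdef, ← map_mul]
    have : Multiplicative.ofAdd (1 : ZMod 2) * Multiplicative.ofAdd 1 = 1 := by decide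
    rw [this, map_one]
  have hXHconj : XH * YH * XH⁻¹ = YH⁻¹ := by
    have h := SemidirectProduct.inl_aut (φ := φn) (Multiplicative.ofAdd (1 : ZMod 2))
      (Multiplicative.ofAdd (1 : ZMod (2 ^ n)))
    rw [hφn, map_inv, map_inv] at h
    rw [hYHdef, hXHdef]
    exact h.symm
  have hdecomp : ∀ g, YH ^ iH g * XH ^ jH g = g := by
    intro g
    rw [hYHpow, hXHpow]
    have h1 : Multiplicative.ofAdd ((iH g : ZMod (2 ^ n))) = g.left := by
      rw [hiHdef]
      show Multiplicative.ofAdd (((Multiplicative.toAdd g.left).val : ZMod (2 ^ n))) = g.left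
      rw [ZMod.natCast_val, ZMod.cast_id]
      exact ofAdd_toAdd _
    have h2 : Multiplicative.ofAdd ((jH g : ZMod 2)) = g.right := by
      rw [hjHdef]
      show Multiplicative.ofAdd (((Multiplicative.toAdd g.right).val : ZMod 2)) = g.right
      rw [ZMod.natCast_val, ZMod.cast_id]
      exact ofAdd_toAdd _
    rw [h1, h2, SemidirectProduct.inl_left_mul_inr_right]
  have huniqI : ∀ i j : ℕ, i < 2 ^ n → iH (YH ^ i * XH ^ j) = i := by
    intro i j hi
    rw [hYHpow, hXHpow, hiHdef]
    show (Multiplicative.toAdd ((SemidirectProduct.inl (Multiplicative.ofAdd ((i : ZMod (2 ^ n))))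
      * SemidirectProduct.inr (Multiplicative.ofAdd ((j : ZMod 2)))).left)).val = i
    rw [SemidirectProduct.mul_left]
    simp only [SemidirectProduct.left_inl, SemidirectProduct.right_inl,
      SemidirectProduct.left_inr, map_one, MulAut.one_apply, mul_one, toAdd_ofAdd]
    exact ZMod.val_natCast_of_lt hi
  have huniqJ : ∀ i j : ℕ, j < 2 → jH (YH ^ i * XH ^ j) = j := by
    intro i j hj
    rw [hYHpow, hXHpow, hjHdef]
    show (Multiplicative.toAdd ((SemidirectProduct.inl (Multiplicative.ofAdd ((i : ZMod (2 ^ n))))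
      * SemidirectProduct.inr (Multiplicative.ofAdd ((j : ZMod 2)))).right)).val = j
    rw [SemidirectProduct.mul_right, SemidirectProduct.right_inl, SemidirectProduct.right_inr,
      one_mul, toAdd_ofAdd]
    exact ZMod.val_natCast_of_lt hj
  -- the extension group E = Ext f₀
  set z : ZMod 2 → Stmt15Aux.Ext f₀ := fun α => Stmt15Aux.Ext.mk f₀ α 1 with hzdef
  set YE : Stmt15Aux.Ext f₀ := Stmt15Aux.Ext.mk f₀ 0 YH with hYEdef
  set XE : Stmt15Aux.Ext f₀ := Stmt15Aux.Ext.mk f₀ 0 XH with hXEdef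
  have co_mul : ∀ x y : Stmt15Aux.Ext f₀,
      Stmt15Aux.Ext.co (x * y)
        = Stmt15Aux.Ext.co x + Stmt15Aux.Ext.co y
            + f₀ (Stmt15Aux.Ext.el x, Stmt15Aux.Ext.el y) := fun _ _ => rfl
  have el_mul : ∀ x y : Stmt15Aux.Ext f₀,
      Stmt15Aux.Ext.el (x * y) = Stmt15Aux.Ext.el x * Stmt15Aux.Ext.el y := fun _ _ => rfl
  have el_inv : ∀ x : Stmt15Aux.Ext f₀, Stmt15Aux.Ext.el x⁻¹ = (Stmt15Aux.Ext.el x)⁻¹ :=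
    fun _ => rfl
  have el_one : Stmt15Aux.Ext.el (1 : Stmt15Aux.Ext f₀) = 1 := rfl
  have el_z : ∀ α, Stmt15Aux.Ext.el (z α) = 1 := fun _ => rfl
  have co_z : ∀ α, Stmt15Aux.Ext.co (z α) = α := fun _ => rfl
  have el_YE : Stmt15Aux.Ext.el YE = YH := rfl
  have el_XE : Stmt15Aux.Ext.el XE = XH := rfl
  have el_pow : ∀ (x : Stmt15Aux.Ext f₀) (m : ℕ),
      Stmt15Aux.Ext.el (x ^ m) = (Stmt15Aux.Ext.el x) ^ m := by
    intro x m
    induction m with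
    | zero => rw [pow_zero, pow_zero]; exact el_one
    | succ m ih => rw [pow_succ, pow_succ, el_mul, ih]
  have hz : ∀ α β, z α * z β = z (α + β) := by
    intro α β
    refine Stmt15Aux.Ext.ext f₀ ?_ ?_
    · rw [co_mul, co_z, co_z, co_z, el_z, el_z, h1₀]
      ring
    · rw [el_mul, el_z, el_z, el_z, one_mul]
  have hz0 : z 0 = 1 := rfl
  have hcen : ∀ α x, z α * x = x * z α := by
    intro α x
    refine Stmt15Aux.Ext.ext f₀ ?_ ?_
    · rw [co_mul, co_mul, co_z, el_z, h1₀, h2₀]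
      ring
    · rw [el_mul, el_mul, el_z, one_mul, mul_one]
  set cb : ZMod 2 := Stmt15Aux.Ext.co (YE ^ (2 ^ n)) with hcbdef
  have hYEN : YE ^ (2 ^ n) = z cb := by
    refine Stmt15Aux.Ext.ext f₀ ?_ ?_
    · rw [co_z]
    · rw [el_z, el_pow, el_YE, hYHN]
  set ca : ZMod 2 := Stmt15Aux.Ext.co (XE ^ 2) with hcadef
  have hXE2 : XE ^ 2 = z ca := by
    refine Stmt15Aux.Ext.ext f₀ ?_ ?_
    · rw [co_z]
    · rw [el_z, el_pow, el_XE, pow_two, hXH2]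
  set cc : ZMod 2 := Stmt15Aux.Ext.co (XE * YE * XE⁻¹ * YE) with hccdef
  have hwz : XE * YE * XE⁻¹ * YE = z cc := by
    refine Stmt15Aux.Ext.ext f₀ ?_ ?_
    · rw [co_z]
    · rw [el_z, el_mul, el_mul, el_mul, el_inv, el_YE, el_XE, hXHconj, inv_mul_cancel]
  have hXYE : XE * YE = z cc * YE⁻¹ * XE := by
    rw [← hwz]
    group
  have co_zmul : ∀ (α : ZMod 2) (x : Stmt15Aux.Ext f₀),
      Stmt15Aux.Ext.co (z α * x) = α + Stmt15Aux.Ext.co x := by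
    intro α x
    rw [co_mul, co_z, el_z, h1₀, add_zero]
  have hPel : ∀ g, Stmt15Aux.Ext.el (YE ^ iH g * XE ^ jH g) = g := by
    intro g
    rw [el_mul, el_pow, el_pow, el_YE, el_XE, hdecomp]
  have key : ∀ g h,
      Stmt15Aux.Ext.co (YE ^ iH g * XE ^ jH g) + Stmt15Aux.Ext.co (YE ^ iH h * XE ^ jH h)
          + f₀ (g, h)
        = ((jH g : ZMod 2) * (jH h : ZMod 2) * ca + (jH g : ZMod 2) * (iH h : ZMod 2) * cc
            + (if jH g = 0 then (((iH g + iH h) / 2 ^ n : ℕ) : ZMod 2)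
                else if iH h ≤ iH g then 0 else 1) * cb)
          + Stmt15Aux.Ext.co (YE ^ iH (g * h) * XE ^ jH (g * h)) := by
    intro g h
    have hE := Stmt15Aux.master z YE XE (2 ^ n) ca cb cc hz hz0 hcen hYEN hXE2 hXYE hNpos
      (iH g) (jH g) (iH h) (jH h) (hiHlt g) (hjHlt g) (hiHlt h) (hjHlt h)
    have hi''lt : (if jH g = 0 then (iH g + iH h) % 2 ^ n
        else if iH h ≤ iH g then iH g - iH h else iH g + 2 ^ n - iH h) < 2 ^ n := by
      have h1 := hiHlt g
      have h2 := hiHlt h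
      split_ifs with h' h''
      · exact Nat.mod_lt _ hNpos
      · omega
      · omega
    have hj''lt : (jH g + jH h) % 2 < 2 := by omega
    have hel := congrArg Stmt15Aux.Ext.el hE
    rw [el_mul, hPel, hPel, el_mul, el_z, one_mul, el_mul, el_pow, el_pow, el_YE, el_XE] at hel
    have hIgh : iH (g * h) = (if jH g = 0 then (iH g + iH h) % 2 ^ n
        else if iH h ≤ iH g then iH g - iH h else iH g + 2 ^ n - iH h) := by
      rw [hel]
      exact huniqI _ _ hi''lt
    have hJgh : jH (g * h) = (jH g + jH h) % 2 := by
      rw [hel]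
      exact huniqJ _ _ hj''lt
    have hco := congrArg Stmt15Aux.Ext.co hE
    rw [co_zmul] at hco
    rw [co_mul, hPel, hPel] at hco
    rw [hIgh, hJgh]
    rw [hco]
  -- the n+1 level
  set IG : (Multiplicative (ZMod (2 ^ (n + 1))) ⋊[φn1] Multiplicative (ZMod 2)) → ℕ :=
    fun g => (Multiplicative.toAdd g.left).val with hIGdef
  have hIGlt : ∀ x, IG x < 2 ^ (n + 1) := fun x => ZMod.val_lt _
  set χ₂ : (Multiplicative (ZMod (2 ^ (n + 1))) ⋊[φn1] Multiplicative (ZMod 2)) → ZMod 2 :=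
    fun g => Multiplicative.toAdd g.right with hχ₂def
  set χ₁ : (Multiplicative (ZMod (2 ^ (n + 1))) ⋊[φn1] Multiplicative (ZMod 2)) → ZMod 2 :=
    fun g => ZMod.castHom (dvd_pow_self 2 (Nat.succ_ne_zero n)) (ZMod 2)
      (Multiplicative.toAdd g.left) with hχ₁def
  set φ' : (Multiplicative (ZMod (2 ^ (n + 1))) ⋊[φn1] Multiplicative (ZMod 2)) → ZMod 2 :=
    fun g => Stmt15Aux.Ext.co (YE ^ iH (π g) * XE ^ jH (π g))
      + ((IG g / 2 ^ n : ℕ) : ZMod 2) * cb + f (1, 1) with hφ'def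
  have hφ'app : ∀ g, φ' g = Stmt15Aux.Ext.co (YE ^ iH (π g) * XE ^ jH (π g))
      + ((IG g / 2 ^ n : ℕ) : ZMod 2) * cb + f (1, 1) := fun _ => rfl
  have hπleft : ∀ x, (π x).left = Multiplicative.ofAdd
      (ZMod.castHom (pow_dvd_pow 2 (Nat.le_succ n)) (ZMod (2 ^ n))
        (Multiplicative.toAdd x.left)) := fun x => by rw [hπ]
  have hπright : ∀ x, (π x).right = x.right := fun x => by rw [hπ]
  have hiHπ : ∀ x, iH (π x) = IG x % 2 ^ n := by
    intro x
    show (Multiplicative.toAdd (π x).left).val = IG x % 2 ^ n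
    rw [hπleft, toAdd_ofAdd, ZMod.castHom_apply, ← ZMod.natCast_val, ZMod.val_natCast]
  have hjHπ : ∀ x, jH (π x) = (Multiplicative.toAdd x.right).val := by
    intro x
    show (Multiplicative.toAdd (π x).right).val = _
    rw [hπright]
  have hχ₂cast : ∀ x, ((jH (π x) : ℕ) : ZMod 2) = χ₂ x := by
    intro x
    rw [hjHπ, ZMod.natCast_val, ZMod.cast_id]
  have hχ₁cast : ∀ x, ((iH (π x) : ℕ) : ZMod 2) = χ₁ x := by
    intro x
    rw [hiHπ]
    have hstep : ((IG x % 2 ^ n : ℕ) : ZMod 2) = ((IG x : ℕ) : ZMod 2) := by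
      rw [ZMod.natCast_eq_natCast_iff]
      exact Nat.mod_mod_of_dvd _ (dvd_pow_self 2 (by omega))
    rw [hstep]
    show _ = ZMod.castHom (dvd_pow_self 2 (Nat.succ_ne_zero n)) (ZMod 2)
      (Multiplicative.toAdd x.left)
    rw [ZMod.castHom_apply, ← ZMod.natCast_val]
  have hpow1 : 2 ^ (n + 1) = 2 * 2 ^ n := by ring
  have hcarry : ∀ g h,
      (if jH (π g) = 0 then (((iH (π g) + iH (π h)) / 2 ^ n : ℕ) : ZMod 2)
          else if iH (π h) ≤ iH (π g) then 0 else 1)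
        = ((IG g / 2 ^ n : ℕ) : ZMod 2) + ((IG h / 2 ^ n : ℕ) : ZMod 2)
            + ((IG (g * h) / 2 ^ n : ℕ) : ZMod 2) := by
    intro g h
    rcases hcases g.right with hr | hr
    · have hj0 : jH (π g) = 0 := by
        rw [hjHπ, hr]
        simp
      rw [if_pos hj0]
      have hmulleft : (g * h).left = g.left * h.left := by
        rw [SemidirectProduct.mul_left, hr, map_one, MulAut.one_apply]
      have hIGgh : IG (g * h) = (IG g + IG h) % 2 ^ (n + 1) := by
        show (Multiplicative.toAdd (g * h).left).val = _
        rw [hmulleft, toAdd_mul, ZMod.val_add]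
      rw [hiHπ, hiHπ, hIGgh, ← Nat.cast_add, ← Nat.cast_add, ZMod.natCast_eq_natCast_iff]
      show _ % 2 = _ % 2
      rw [hpow1]
      exact Stmt15Aux.parity_add (2 ^ n) (IG g) (IG h) hNpos
        (by rw [← hpow1]; exact hIGlt g) (by rw [← hpow1]; exact hIGlt h)
    · have hj1 : jH (π g) = 1 := by
        rw [hjHπ, hr]
        rfl
      rw [if_neg (by omega)]
      have hmulleft : (g * h).left = g.left * (h.left)⁻¹ := by
        rw [SemidirectProduct.mul_left, hr, hφn1]
      have hIGgh : IG (g * h) = (IG g + 2 ^ (n + 1) - IG h) % 2 ^ (n + 1) := by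
        show (Multiplicative.toAdd (g * h).left).val = _
        rw [hmulleft, toAdd_mul, toAdd_inv]
        have hle : IG h ≤ IG g + 2 ^ (n + 1) := by
          have := hIGlt h
          omega
        have hcast : Multiplicative.toAdd g.left + -Multiplicative.toAdd h.left
            = ((IG g + 2 ^ (n + 1) - IG h : ℕ) : ZMod (2 ^ (n + 1))) := by
          rw [Nat.cast_sub hle, Nat.cast_add, ZMod.natCast_self, add_zero,
            ZMod.natCast_val, ZMod.cast_id, ZMod.natCast_val, ZMod.cast_id, sub_eq_add_neg]
        rw [hcast, ZMod.val_natCast]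
      have hiff : ∀ c : Prop, ∀ inst : Decidable c,
          (if c then (0 : ZMod 2) else 1) = (((if c then (0 : ℕ) else 1) : ℕ) : ZMod 2) := by
        intro c inst
        split_ifs <;> simp
      rw [hiHπ, hiHπ, hIGgh, hiff, ← Nat.cast_add, ← Nat.cast_add,
        ZMod.natCast_eq_natCast_iff]
      show _ % 2 = _ % 2
      rw [hpow1]
      exact Stmt15Aux.parity_sub (2 ^ n) (IG g) (IG h) hNpos
        (by rw [← hpow1]; exact hIGlt g) (by rw [← hpow1]; exact hIGlt h)
  have hχ₂add : ∀ a b, χ₂ (a * b) = χ₂ a + χ₂ b := by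
    intro a b
    show Multiplicative.toAdd ((a * b).right) = _
    rw [SemidirectProduct.mul_right, toAdd_mul]
  have hχ₁add : ∀ a b, χ₁ (a * b) = χ₁ a + χ₁ b := by
    intro a b
    show ZMod.castHom (dvd_pow_self 2 (Nat.succ_ne_zero n)) (ZMod 2)
      (Multiplicative.toAdd ((a * b).left)) = _
    rw [SemidirectProduct.mul_left, toAdd_mul, map_add]
    have hact : ZMod.castHom (dvd_pow_self 2 (Nat.succ_ne_zero n)) (ZMod 2)
        (Multiplicative.toAdd ((φn1 a.right) b.left)) = χ₁ b := by
      rcases hcases a.right with hr | hr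
      · rw [hr, map_one, MulAut.one_apply]
      · rw [hr, hφn1, toAdd_inv, map_neg, hneg]
    rw [hact]
  refine ⟨2, ![fun g => ca * χ₂ g, fun g => cc * χ₂ g], ![χ₂, χ₁], ?_, φ', ?_⟩
  · intro i
    fin_cases i
    · refine ⟨fun a b => ?_, fun a b => ?_⟩
      · show ca * χ₂ (a * b) = ca * χ₂ a + ca * χ₂ b
        rw [hχ₂add, mul_add]
      · show χ₂ (a * b) = χ₂ a + χ₂ b
        exact hχ₂add a b
    · refine ⟨fun a b => ?_, fun a b => ?_⟩
      · show cc * χ₂ (a * b) = cc * χ₂ a + cc * χ₂ b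
        rw [hχ₂add, mul_add]
      · show χ₁ (a * b) = χ₁ a + χ₁ b
        exact hχ₁add a b
  · funext x
    obtain ⟨g, h⟩ := x
    have hρ1 : ∀ (u : Multiplicative (ZMod (2 ^ (n + 1))) ⋊[φn1] Multiplicative (ZMod 2))
        (v : ZMod 2),
        ((trivRep 2 (Multiplicative (ZMod (2 ^ (n + 1))) ⋊[φn1] Multiplicative (ZMod 2))).ρ u) v
          = v := fun _ _ => rfl
    show f (π g, π h) = _
    simp only [Pi.add_apply, Fin.sum_univ_two, Matrix.cons_val_zero, Matrix.cons_val_one,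
      Matrix.head_cons, d₁₂_hom_apply, hρ1]
    have K := key (π g) (π h)
    rw [← map_mul] at K
    rw [hf₀app] at K
    rw [hχ₂cast g, hχ₂cast h, hχ₁cast h] at K
    rw [hcarry g h] at K
    simp only [hφ'app]
    exact Stmt15Aux.final_lin _ _ _ _ _ _ _ _ _ _ _ _ _ _ K
end

section
/- Let p be an odd prime, let n ≥ 1 and k ≥ 1, and let B_p(n;1,k) = (Z/p^n) ⋊ Z/p^n, where a fixed generator x of the acting factor acts on Z/p^n by x y x^{-1} = y^{p^k+1}. Under the inflation map H^2(B_p(n;1,k), F_p) → H^2(B_p(n+1;1,k), F_p) induced by the natural surjection B_p(n+1;1,k) → B_p(n;1,k), every class of degree two fully decomposes: the image of every element of H^2(B_p(n;1,k), F_p) is a finite sum of cup products of two degree-one classes in H^1(B_p(n+1;1,k), F_p). -/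
open groupCohomology

namespace Stmt16Aux

variable {G : Type} [Group G] {A : Type} [CommRing A]

/-- The (inhomogeneous, non-normalized) 2-cocycle condition for trivial coefficients. -/
def IsCocycle2 (h : G × G → A) : Prop :=
  ∀ u v w : G, h (v, w) - h (u * v, w) + h (u, v * w) - h (u, v) = 0

theorem IsCocycle2.one_one_right {h : G × G → A} (hc : IsCocycle2 h) (v : G) :
    h (1, v) = h (1, 1) := by
  have := hc 1 1 v
  rw [one_mul, one_mul] at this
  linear_combination this

theorem IsCocycle2.one_one_left {h : G × G → A} (hc : IsCocycle2 h) (u : G) :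
    h (u, 1) = h (1, 1) := by
  have := hc u 1 1
  rw [mul_one, mul_one] at this
  linear_combination -this

/-- The central extension of `G` by `A` determined by a 2-cocycle. -/
def Cx (h : {h : G × G → A // IsCocycle2 h}) : Type := G × A

namespace Cx

variable (h : {h : G × G → A // IsCocycle2 h})

/-- Constructor for `Cx`. -/
def mk (w : G) (σ : A) : Cx h := (w, σ)

instance : Group (Cx h) where
  mul e₁ e₂ := (e₁.1 * e₂.1, e₁.2 + e₂.2 + h.1 (e₁.1, e₂.1))
  one := (1, -h.1 (1, 1))
  inv e := (e.1⁻¹, -e.2 - h.1 (e.1⁻¹, e.1) - h.1 (1, 1))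
  mul_assoc e₁ e₂ e₃ := by
    have := h.2 e₁.1 e₂.1 e₃.1
    refine Prod.ext (mul_assoc _ _ _) ?_
    show e₁.2 + e₂.2 + h.1 (e₁.1, e₂.1) + e₃.2 + h.1 (e₁.1 * e₂.1, e₃.1)
        = e₁.2 + (e₂.2 + e₃.2 + h.1 (e₂.1, e₃.1)) + h.1 (e₁.1, e₂.1 * e₃.1)
    linear_combination -this
  one_mul e := by
    refine Prod.ext (one_mul _) ?_
    show -h.1 (1, 1) + e.2 + h.1 (1, e.1) = e.2
    rw [h.2.one_one_right e.1]; ring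
  mul_one e := by
    refine Prod.ext (mul_one _) ?_
    show e.2 + -h.1 (1, 1) + h.1 (e.1, 1) = e.2
    rw [h.2.one_one_left e.1]; ring
  inv_mul_cancel e := by
    refine Prod.ext (inv_mul_cancel _) ?_
    show -e.2 - h.1 (e.1⁻¹, e.1) - h.1 (1, 1) + e.2 + h.1 (e.1⁻¹, e.1) = -h.1 (1, 1)
    ring

theorem mul_def (e₁ e₂ : Cx h) :
    e₁ * e₂ = mk h (e₁.1 * e₂.1) (e₁.2 + e₂.2 + h.1 (e₁.1, e₂.1)) := rfl

theorem one_def : (1 : Cx h) = mk h 1 (-h.1 (1, 1)) := rfl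

theorem fst_mul (e₁ e₂ : Cx h) : (e₁ * e₂).1 = e₁.1 * e₂.1 := rfl

theorem pow_mk (w : G) (σ : A) (j : ℕ) :
    (mk h w σ) ^ j =
      mk h (w ^ j) ((j : A) * σ + (∑ i ∈ Finset.range j, h.1 (w ^ i, w)) - h.1 (1, 1)) := by
  induction j with
  | zero =>
    rw [pow_zero, one_def]
    simp [mk]
    rfl
  | succ j ih =>
    rw [pow_succ, ih, mul_def]
    refine Prod.ext (by simp [mk, pow_succ]) ?_
    show (j : A) * σ + (∑ i ∈ Finset.range j, h.1 (w ^ i, w)) - h.1 (1, 1) + σ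
        + h.1 (w ^ j, w) = _
    show _ = ((j + 1 : ℕ) : A) * σ + (∑ i ∈ Finset.range (j + 1), h.1 (w ^ i, w)) - h.1 (1, 1)
    rw [Finset.sum_range_succ]
    push_cast
    ring

theorem pow_eq_one_of_const (w : G) (L q : ℕ) (hq : (q : A) = 0) (hw : w ^ (L * q) = 1)
    (hconst : ∀ i : ℕ, h.1 (w ^ (L * i), w ^ L) = h.1 (1, 1)) :
    (mk h w 0) ^ (L * q) = 1 := by
  rw [pow_mul, pow_mk, pow_mk]
  have hsum : ∑ i ∈ Finset.range q, h.1 ((w ^ L) ^ i, w ^ L) = (q : A) * h.1 (1, 1) :=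
    calc ∑ i ∈ Finset.range q, h.1 ((w ^ L) ^ i, w ^ L)
        = ∑ _i ∈ Finset.range q, h.1 (1, 1) :=
          Finset.sum_congr rfl fun i _ => by rw [← pow_mul]; exact hconst i
      _ = (q : A) * h.1 (1, 1) := by rw [Finset.sum_const, Finset.card_range, nsmul_eq_mul]
  rw [hsum, one_def, ← pow_mul, hw]
  refine congrArg _ ?_
  rw [hq]
  ring

end Cx

/-! ### General group lemmas -/

theorem pow_mul_pow_of_rel {E : Type} [Group E] {X Y : E} {m : ℕ}
    (hxy : X * Y = Y ^ m * X) (r b : ℕ) : X ^ r * Y ^ b = Y ^ (m ^ r * b) * X ^ r := by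
  have h1 : ∀ b : ℕ, X * Y ^ b = Y ^ (m * b) * X := by
    intro b
    induction b with
    | zero => simp
    | succ b ih =>
      rw [pow_succ, ← mul_assoc, ih, mul_assoc, hxy, ← mul_assoc, ← pow_add]
      ring_nf
  induction r generalizing b with
  | zero => simp
  | succ r ih =>
    rw [pow_succ, mul_assoc, h1, ← mul_assoc, ih (m * b), mul_assoc, ← pow_succ]
    ring_nf

theorem pow_eq_pow_of_cast_eq {E : Type} [Group E] {e : E} {M : ℕ} (he : e ^ M = 1)
    (i j : ℕ) (hij : (i : ZMod M) = (j : ZMod M)) : e ^ i = e ^ j := by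
  have hmod : ∀ a : ℕ, e ^ a = e ^ (a % M) := by
    intro a
    conv_lhs => rw [← Nat.div_add_mod a M]
    rw [pow_add, pow_mul, he, one_pow, one_mul]
  rw [hmod i, hmod j, (ZMod.natCast_eq_natCast_iff i j M).1 hij]

theorem aux (p : ℕ) [Fact p.Prime] (n k : ℕ) (hk : 1 ≤ k)
    (φn1 : Multiplicative (ZMod (p ^ (n + 1))) →* MulAut (Multiplicative (ZMod (p ^ (n + 1)))))
    (hφn1 : ∀ y, φn1 (Multiplicative.ofAdd 1) y = y ^ (p ^ k + 1))
    (g : (Multiplicative (ZMod (p ^ (n + 1))) ⋊[φn1] Multiplicative (ZMod (p ^ (n + 1)))) ×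
         (Multiplicative (ZMod (p ^ (n + 1))) ⋊[φn1] Multiplicative (ZMod (p ^ (n + 1)))) →
           ZMod p)
    (hg : IsCocycle2 g)
    (hgY : ∀ i : ℕ, g ((SemidirectProduct.inl (Multiplicative.ofAdd 1) :
          Multiplicative (ZMod (p ^ (n + 1))) ⋊[φn1] Multiplicative (ZMod (p ^ (n + 1)))) ^
          (p ^ n * i),
        (SemidirectProduct.inl (Multiplicative.ofAdd 1)) ^ (p ^ n)) = g (1, 1))
    (hgX : ∀ i : ℕ, g ((SemidirectProduct.inr (Multiplicative.ofAdd 1) :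
          Multiplicative (ZMod (p ^ (n + 1))) ⋊[φn1] Multiplicative (ZMod (p ^ (n + 1)))) ^
          (p ^ n * i),
        (SemidirectProduct.inr (Multiplicative.ofAdd 1)) ^ (p ^ n)) = g (1, 1)) :
    ∃ χ ψ φ' : (Multiplicative (ZMod (p ^ (n + 1))) ⋊[φn1]
        Multiplicative (ZMod (p ^ (n + 1)))) → ZMod p,
      (∀ a b, χ (a * b) = χ a + χ b) ∧ (∀ a b, ψ (a * b) = ψ a + ψ b) ∧
      ∀ u v, g (u, v) = χ u * ψ v + (φ' v - φ' (u * v) + φ' u) := by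
  haveI : NeZero (p ^ (n + 1)) := ⟨pow_ne_zero _ (Nat.Prime.ne_zero Fact.out)⟩
  set ρ : ZMod (p ^ (n + 1)) →+* ZMod p :=
    ZMod.castHom (dvd_pow_self p (Nat.succ_ne_zero n)) (ZMod p) with hρ
  -- basic facts about N := Multiplicative (ZMod (p ^ (n + 1)))
  have ofAdd1pow : ∀ j : ℕ, (Multiplicative.ofAdd (1 : ZMod (p ^ (n + 1)))) ^ j
      = Multiplicative.ofAdd ((j : ZMod (p ^ (n + 1)))) := by
    intro j
    rw [← ofAdd_nsmul, nsmul_eq_mul, mul_one]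
  have genN : ∀ z : Multiplicative (ZMod (p ^ (n + 1))),
      (Multiplicative.ofAdd (1 : ZMod (p ^ (n + 1)))) ^ (z.toAdd.val) = z := by
    intro z
    rw [ofAdd1pow, ZMod.natCast_val, ZMod.cast_id, ofAdd_toAdd]
  have act : ∀ q z : Multiplicative (ZMod (p ^ (n + 1))),
      φn1 q z = z ^ ((p ^ k + 1) ^ q.toAdd.val) := by
    have actpow : ∀ (r : ℕ) (z : Multiplicative (ZMod (p ^ (n + 1)))),
        φn1 ((Multiplicative.ofAdd (1 : ZMod (p ^ (n + 1)))) ^ r) z = z ^ ((p ^ k + 1) ^ r) := by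
      intro r
      induction r with
      | zero => intro z; simp
      | succ r ih =>
        intro z
        have step : φn1 ((Multiplicative.ofAdd (1 : ZMod (p ^ (n + 1)))) ^ (r + 1)) z
            = (z ^ (p ^ k + 1)) ^ ((p ^ k + 1) ^ r) := by
          conv_lhs => rw [pow_succ (Multiplicative.ofAdd (1 : ZMod (p ^ (n + 1)))) r, map_mul,
            MulAut.mul_apply, hφn1 z]
          exact ih _
        rw [step, ← pow_mul, ← pow_succ']
    intro q z
    conv_lhs => rw [← genN q]
    exact actpow _ z
  have mmodp : ((p ^ k + 1 : ℕ) : ZMod p) = 1 := by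
    push_cast
    rw [ZMod.natCast_self, zero_pow (by omega), zero_add]
  have actmodp : ∀ q z : Multiplicative (ZMod (p ^ (n + 1))),
      ρ ((φn1 q z).toAdd) = ρ z.toAdd := by
    intro q z
    rw [act, toAdd_pow, nsmul_eq_mul, map_mul, map_natCast, Nat.cast_pow, mmodp, one_pow, one_mul]
  -- the two generators of G'
  set y' : Multiplicative (ZMod (p ^ (n + 1))) ⋊[φn1] Multiplicative (ZMod (p ^ (n + 1))) :=
    SemidirectProduct.inl (Multiplicative.ofAdd 1) with hy'
  set x' : Multiplicative (ZMod (p ^ (n + 1))) ⋊[φn1] Multiplicative (ZMod (p ^ (n + 1))) :=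
    SemidirectProduct.inr (Multiplicative.ofAdd 1) with hx'
  have ypow : ∀ j : ℕ, y' ^ j
      = SemidirectProduct.inl (Multiplicative.ofAdd ((j : ZMod (p ^ (n + 1))))) := by
    intro j; rw [hy', ← map_pow, ofAdd1pow]
  have xpow : ∀ j : ℕ, x' ^ j
      = SemidirectProduct.inr (Multiplicative.ofAdd ((j : ZMod (p ^ (n + 1))))) := by
    intro j; rw [hx', ← map_pow, ofAdd1pow]
  have yright : ∀ j : ℕ, (y' ^ j).right = 1 := by
    intro j; rw [ypow]; exact SemidirectProduct.right_inl _
  have xleft : ∀ j : ℕ, (x' ^ j).left = 1 := by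
    intro j; rw [xpow]; exact SemidirectProduct.left_inr _
  have yM : y' ^ (p ^ n * p) = 1 := by
    rw [ypow, ← pow_succ, ZMod.natCast_self, ofAdd_zero, map_one]
  have xM : x' ^ (p ^ n * p) = 1 := by
    rw [xpow, ← pow_succ, ZMod.natCast_self, ofAdd_zero, map_one]
  -- the coefficient and the two characters
  set c : ZMod p := g (x', y') - (∑ i ∈ Finset.range (p ^ k + 1), g (y' ^ i, y')) + g (1, 1)
      - g (y' ^ (p ^ k + 1), x') with hc
  set χ : (Multiplicative (ZMod (p ^ (n + 1))) ⋊[φn1]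
      Multiplicative (ZMod (p ^ (n + 1)))) → ZMod p :=
    fun u => c * ρ (u.right.toAdd) with hχ
  set ψ : (Multiplicative (ZMod (p ^ (n + 1))) ⋊[φn1]
      Multiplicative (ZMod (p ^ (n + 1)))) → ZMod p :=
    fun v => ρ (v.left.toAdd) with hψ
  have homχ : ∀ a b, χ (a * b) = χ a + χ b := by
    intro a b
    rw [hχ]
    show c * ρ ((a * b).right.toAdd) = _
    rw [SemidirectProduct.mul_right, toAdd_mul, map_add]
    ring
  have homψ : ∀ a b, ψ (a * b) = ψ a + ψ b := by
    intro a b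
    rw [hψ]
    show ρ ((a * b).left.toAdd) = _
    rw [SemidirectProduct.mul_left, toAdd_mul, map_add, actmodp]
  have χy : ∀ j : ℕ, χ (y' ^ j) = 0 := by
    intro j
    show c * ρ ((y' ^ j).right.toAdd) = 0
    rw [yright, toAdd_one, map_zero, mul_zero]
  have ψx : ∀ j : ℕ, ψ (x' ^ j) = 0 := by
    intro j
    show ρ ((x' ^ j).left.toAdd) = 0
    rw [xleft, toAdd_one, map_zero]
  have χ1 : χ 1 = 0 := by
    show c * ρ ((1 : _ ⋊[φn1] _).right.toAdd) = 0
    rw [SemidirectProduct.one_right, toAdd_one, map_zero, mul_zero]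
  have ψ1 : ψ 1 = 0 := by
    show ρ ((1 : _ ⋊[φn1] _).left.toAdd) = 0
    rw [SemidirectProduct.one_left, toAdd_one, map_zero]
  have χx : χ x' = c := by
    show c * ρ (x'.right.toAdd) = c
    rw [hx', SemidirectProduct.right_inr, toAdd_ofAdd, map_one, mul_one]
  have ψy : ψ y' = 1 := by
    show ρ (y'.left.toAdd) = 1
    rw [hy', SemidirectProduct.left_inl, toAdd_ofAdd, map_one]
  -- the corrected cocycle
  have hcoc : IsCocycle2 (fun uv => g uv - χ uv.1 * ψ uv.2) := by
    intro u v w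
    have h1 := hg u v w
    simp only
    rw [homχ u v, homψ v w]
    linear_combination h1
  set hh : {h : _ × _ → ZMod p // IsCocycle2 h} :=
    ⟨fun uv => g uv - χ uv.1 * ψ uv.2, hcoc⟩ with hhh
  have hhval : ∀ u v, hh.1 (u, v) = g (u, v) - χ u * ψ v := fun _ _ => rfl
  set Y : Cx hh := Cx.mk hh y' 0 with hY
  set X : Cx hh := Cx.mk hh x' 0 with hX
  have h11 : hh.1 (1, 1) = g (1, 1) := by rw [hhval, χ1, zero_mul, sub_zero]
  -- orders
  have ordY : Y ^ (p ^ (n + 1)) = 1 := by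
    have h' : Y ^ (p ^ n * p) = 1 := by
      refine Cx.pow_eq_one_of_const hh y' (p ^ n) p (ZMod.natCast_self p) yM ?_
      intro i
      rw [hhval, χy, zero_mul, sub_zero, h11]
      exact hgY i
    convert h' using 2
    exact pow_succ p n
  have ordX : X ^ (p ^ (n + 1)) = 1 := by
    have h' : X ^ (p ^ n * p) = 1 := by
      refine Cx.pow_eq_one_of_const hh x' (p ^ n) p (ZMod.natCast_self p) xM ?_
      intro i
      rw [hhval, ψx, mul_zero, sub_zero, h11]
      exact hgX i
    convert h' using 2
    exact pow_succ p n
  -- the commutation relation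
  have rel : X * Y = Y ^ (p ^ k + 1) * X := by
    rw [hY, hX, Cx.mul_def, Cx.pow_mk, Cx.mul_def]
    refine Prod.ext ?_ ?_
    · show x' * y' = y' ^ (p ^ k + 1) * x'
      ext
      · simp only [SemidirectProduct.mul_left, ypow, hx', hy', SemidirectProduct.left_inr,
          SemidirectProduct.right_inr, SemidirectProduct.left_inl, SemidirectProduct.right_inl,
          map_one, MulAut.one_apply, mul_one, one_mul, hφn1, ofAdd1pow]
        rw [← map_pow, SemidirectProduct.left_inl, ofAdd1pow]
      · simp only [SemidirectProduct.mul_right, ypow, hx', hy', SemidirectProduct.right_inr,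
          SemidirectProduct.right_inl, one_mul, mul_one]
        rw [← map_pow, SemidirectProduct.right_inl, one_mul]
    · show (0 : ZMod p) + 0 + hh.1 (x', y')
        = ((p ^ k + 1 : ℕ) : ZMod p) * 0 + (∑ i ∈ Finset.range (p ^ k + 1), hh.1 (y' ^ i, y'))
          - hh.1 (1, 1) + 0 + hh.1 (y' ^ (p ^ k + 1), x')
      have e1 : hh.1 (x', y') = g (x', y') - c := by rw [hhval, χx, ψy, mul_one]
      have e2 : ∀ i : ℕ, hh.1 (y' ^ i, y') = g (y' ^ i, y') := by
        intro i; rw [hhval, χy, zero_mul, sub_zero]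
      have e3 : hh.1 (y' ^ (p ^ k + 1), x') = g (y' ^ (p ^ k + 1), x') := by
        rw [hhval, χy, zero_mul, sub_zero]
      rw [e1, e3, h11, Finset.sum_congr rfl fun i _ => e2 i, hc]
      ring
  have K := pow_mul_pow_of_rel rel
  -- the multiplicative section
  set s : (Multiplicative (ZMod (p ^ (n + 1))) ⋊[φn1]
      Multiplicative (ZMod (p ^ (n + 1)))) → Cx hh :=
    fun u => Y ^ (u.left.toAdd.val) * X ^ (u.right.toAdd.val) with hs
  have sfst : ∀ u, (s u).1 = u := by
    intro u
    show (Y ^ (u.left.toAdd.val) * X ^ (u.right.toAdd.val)).1 = u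
    rw [Cx.fst_mul, hY, hX, Cx.pow_mk, Cx.pow_mk]
    show y' ^ (u.left.toAdd.val) * x' ^ (u.right.toAdd.val) = u
    rw [ypow, xpow, ZMod.natCast_val, ZMod.cast_id, ZMod.natCast_val, ZMod.cast_id,
      ofAdd_toAdd, ofAdd_toAdd, SemidirectProduct.inl_left_mul_inr_right]
  have smul : ∀ u v, s u * s v = s (u * v) := by
    intro u v
    show Y ^ (u.left.toAdd.val) * X ^ (u.right.toAdd.val)
        * (Y ^ (v.left.toAdd.val) * X ^ (v.right.toAdd.val))
        = Y ^ ((u * v).left.toAdd.val) * X ^ ((u * v).right.toAdd.val)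
    have e1 : Y ^ ((u * v).left.toAdd.val)
        = Y ^ (u.left.toAdd.val + (p ^ k + 1) ^ (u.right.toAdd.val) * v.left.toAdd.val) := by
      refine pow_eq_pow_of_cast_eq ordY _ _ ?_
      push_cast [ZMod.natCast_val, ZMod.cast_id]
      rw [SemidirectProduct.mul_left, toAdd_mul, act, toAdd_pow, nsmul_eq_mul]
      push_cast [ZMod.natCast_val, ZMod.cast_id]
      ring
    have e2 : X ^ ((u * v).right.toAdd.val)
        = X ^ (u.right.toAdd.val + v.right.toAdd.val) := by
      refine pow_eq_pow_of_cast_eq ordX _ _ ?_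
      push_cast [ZMod.natCast_val, ZMod.cast_id]
      rw [SemidirectProduct.mul_right, toAdd_mul]
    rw [e1]
    rw [e2]
    rw [pow_add Y (u.left.toAdd.val) ((p ^ k + 1) ^ (u.right.toAdd.val) * v.left.toAdd.val)]
    rw [pow_add X (u.right.toAdd.val) (v.right.toAdd.val)]
    rw [mul_assoc (Y ^ (u.left.toAdd.val)), ← mul_assoc (X ^ (u.right.toAdd.val)), K,
      mul_assoc, ← mul_assoc (Y ^ (u.left.toAdd.val)), mul_assoc]
  -- conclusion
  refine ⟨χ, ψ, fun u => -(s u).2, homχ, homψ, ?_⟩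
  intro u v
  have := smul u v
  rw [Cx.mul_def] at this
  have h2 : (s u).2 + (s v).2 + hh.1 ((s u).1, (s v).1) = (s (u * v)).2 :=
    congrArg Prod.snd this
  rw [sfst, sfst, hhval] at h2
  linear_combination h2

end Stmt16Aux

/-- Under inflation along the natural surjection `B_p(n+1;1,k) → B_p(n;1,k)` (where
`B_p(n;1,k) = Z/pⁿ ⋊ Z/pⁿ`, a fixed generator `x` of the acting factor acting by
`x y x⁻¹ = y^{pᵏ+1}`), every degree-two cohomology class fully decomposes: its image is,
up to a coboundary, a finite sum of cup products of two degree-one classes. -/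
theorem stmt16 (p : ℕ) [Fact p.Prime] (hp : Odd p) (n k : ℕ) (hn : 1 ≤ n) (hk : 1 ≤ k)
    (φn : Multiplicative (ZMod (p ^ n)) →* MulAut (Multiplicative (ZMod (p ^ n))))
    (hφn : ∀ y, φn (Multiplicative.ofAdd 1) y = y ^ (p ^ k + 1))
    (φn1 : Multiplicative (ZMod (p ^ (n + 1))) →* MulAut (Multiplicative (ZMod (p ^ (n + 1)))))
    (hφn1 : ∀ y, φn1 (Multiplicative.ofAdd 1) y = y ^ (p ^ k + 1))
    (π : (Multiplicative (ZMod (p ^ (n + 1))) ⋊[φn1] Multiplicative (ZMod (p ^ (n + 1)))) →*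
         (Multiplicative (ZMod (p ^ n)) ⋊[φn] Multiplicative (ZMod (p ^ n))))
    (hπ : ∀ x, π x =
      ⟨Multiplicative.ofAdd
          (ZMod.castHom (pow_dvd_pow p (Nat.le_succ n)) (ZMod (p ^ n)) x.left.toAdd),
        Multiplicative.ofAdd
          (ZMod.castHom (pow_dvd_pow p (Nat.le_succ n)) (ZMod (p ^ n)) x.right.toAdd)⟩) :
    ∀ f : (Multiplicative (ZMod (p ^ n)) ⋊[φn] Multiplicative (ZMod (p ^ n))) ×
          (Multiplicative (ZMod (p ^ n)) ⋊[φn] Multiplicative (ZMod (p ^ n))) → ZMod p,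
      f ∈ cocycles₂
        (trivRep p (Multiplicative (ZMod (p ^ n)) ⋊[φn] Multiplicative (ZMod (p ^ n)))) →
      ∃ (ℓ : ℕ)
        (χ ψ : Fin ℓ →
          (Multiplicative (ZMod (p ^ (n + 1))) ⋊[φn1] Multiplicative (ZMod (p ^ (n + 1)))) →
            ZMod p),
        (∀ i, (∀ a b, χ i (a * b) = χ i a + χ i b) ∧ (∀ a b, ψ i (a * b) = ψ i a + ψ i b)) ∧
        ∃ φ' : (Multiplicative (ZMod (p ^ (n + 1))) ⋊[φn1]
            Multiplicative (ZMod (p ^ (n + 1)))) → ZMod p,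
          (fun x : (Multiplicative (ZMod (p ^ (n + 1))) ⋊[φn1]
                     Multiplicative (ZMod (p ^ (n + 1)))) ×
                   (Multiplicative (ZMod (p ^ (n + 1))) ⋊[φn1]
                     Multiplicative (ZMod (p ^ (n + 1)))) =>
            f (π x.1, π x.2)) =
          (fun x => ∑ i, χ i x.1 * ψ i x.2) +
            (d₁₂ (trivRep p (Multiplicative (ZMod (p ^ (n + 1))) ⋊[φn1]
              Multiplicative (ZMod (p ^ (n + 1)))))).hom φ' := by

  intro f hf
  -- the inflated cochain is a cocycle
  have hg : Stmt16Aux.IsCocycle2 (fun uv :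
      (Multiplicative (ZMod (p ^ (n + 1))) ⋊[φn1] Multiplicative (ZMod (p ^ (n + 1)))) ×
      (Multiplicative (ZMod (p ^ (n + 1))) ⋊[φn1] Multiplicative (ZMod (p ^ (n + 1)))) =>
      f (π uv.1, π uv.2)) := by
    intro u v w
    have h0 := (mem_cocycles₂_def (A := trivRep p _) f).1 hf (π u) (π v) (π w)
    simp only [Rep.trivial_ρ_apply] at h0
    simp only [map_mul]
    exact h0
  -- the images of the generators
  have hπy : π (SemidirectProduct.inl (Multiplicative.ofAdd 1))
      = SemidirectProduct.inl (Multiplicative.ofAdd 1) := by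
    rw [hπ]
    ext
    · simpa using ZMod.cast_one (pow_dvd_pow p (Nat.le_succ n))
    · simp
  have hπx : π (SemidirectProduct.inr (Multiplicative.ofAdd 1))
      = SemidirectProduct.inr (Multiplicative.ofAdd 1) := by
    rw [hπ]
    ext
    · simp
    · simpa using ZMod.cast_one (pow_dvd_pow p (Nat.le_succ n))
  have ofAdd1pown : ∀ j : ℕ, (Multiplicative.ofAdd (1 : ZMod (p ^ n))) ^ j
      = Multiplicative.ofAdd ((j : ZMod (p ^ n))) := by
    intro j
    rw [← ofAdd_nsmul, nsmul_eq_mul, mul_one]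
  have hyn : (SemidirectProduct.inl (Multiplicative.ofAdd 1) :
      Multiplicative (ZMod (p ^ n)) ⋊[φn] Multiplicative (ZMod (p ^ n))) ^ (p ^ n) = 1 := by
    rw [← map_pow, ofAdd1pown, ZMod.natCast_self, ofAdd_zero, map_one]
  have hxn : (SemidirectProduct.inr (Multiplicative.ofAdd 1) :
      Multiplicative (ZMod (p ^ n)) ⋊[φn] Multiplicative (ZMod (p ^ n))) ^ (p ^ n) = 1 := by
    rw [← map_pow, ofAdd1pown, ZMod.natCast_self, ofAdd_zero, map_one]
  have hgY : ∀ i : ℕ, (fun uv :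
      (Multiplicative (ZMod (p ^ (n + 1))) ⋊[φn1] Multiplicative (ZMod (p ^ (n + 1)))) ×
      (Multiplicative (ZMod (p ^ (n + 1))) ⋊[φn1] Multiplicative (ZMod (p ^ (n + 1)))) =>
      f (π uv.1, π uv.2))
      ((SemidirectProduct.inl (Multiplicative.ofAdd 1)) ^ (p ^ n * i),
       (SemidirectProduct.inl (Multiplicative.ofAdd 1)) ^ (p ^ n)) = f (π 1, π 1) := by
    intro i
    simp only [map_pow, hπy]
    rw [pow_mul, hyn, one_pow, map_one]
  have hgX : ∀ i : ℕ, (fun uv :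
      (Multiplicative (ZMod (p ^ (n + 1))) ⋊[φn1] Multiplicative (ZMod (p ^ (n + 1)))) ×
      (Multiplicative (ZMod (p ^ (n + 1))) ⋊[φn1] Multiplicative (ZMod (p ^ (n + 1)))) =>
      f (π uv.1, π uv.2))
      ((SemidirectProduct.inr (Multiplicative.ofAdd 1)) ^ (p ^ n * i),
       (SemidirectProduct.inr (Multiplicative.ofAdd 1)) ^ (p ^ n)) = f (π 1, π 1) := by
    intro i
    simp only [map_pow, hπx]
    rw [pow_mul, hxn, one_pow, map_one]
  obtain ⟨χ, ψ, φ', homχ, homψ, key⟩ :=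
    Stmt16Aux.aux p n k hk φn1 hφn1 _ hg hgY hgX
  refine ⟨1, fun _ => χ, fun _ => ψ, fun _ => ⟨homχ, homψ⟩, φ', ?_⟩
  funext x
  simp only [Pi.add_apply, Fin.sum_univ_one, d₁₂_hom_apply, Rep.trivial_ρ_apply]
  exact key x.1 x.2
end

section
/- Let n ≥ 2 and d ≥ 1, and let A_2(n;d) = (C_{2^n})^d ⋊ C_2 with the inversion action. Then every class γ ∈ H^2(A_2(n;d), F_2) fully decomposes in H^2(A_2(n+1;d), F_2) under the inflation map induced by the natural surjection A_2(n+1;d) → A_2(n;d); that is, the inflation of γ is a finite sum of cup products of two degree-one classes. -/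
open groupCohomology

open Multiplicative SemidirectProduct

namespace Stmt17P


lemma z2_add_self (a : ZMod 2) : a + a = 0 := CharTwo.add_self_eq_zero a

lemma z2_sub (a b : ZMod 2) : a - b = a + b := CharTwo.sub_eq_add a b

section CE

variable {G : Type} [Group G]

/-- A normalized 2-cocycle with values in `ZMod 2`. -/
structure C2 (G : Type) [Group G] where
  f : G × G → ZMod 2
  coc : ∀ g h k : G, f (h, k) + f (g, h * k) = f (g * h, k) + f (g, h)
  nor : f (1, 1) = 0

variable (c : C2 G)

lemma C2.one_fst (g : G) : c.f (1, g) = 0 := by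
  have h := c.coc 1 1 g
  rw [one_mul, one_mul] at h
  have := z2_add_self (c.f (1, g))
  rw [this, c.nor, add_zero] at h
  exact h.symm

lemma C2.one_snd (g : G) : c.f (g, 1) = 0 := by
  have h := c.coc g 1 1
  rw [mul_one, mul_one] at h
  have := z2_add_self (c.f (g, 1))
  rw [this] at h
  rw [c.nor, zero_add] at h
  exact h

lemma C2.inv_pair (g : G) : c.f (g, g⁻¹) = c.f (g⁻¹, g) := by
  have h := c.coc g g⁻¹ g
  rw [inv_mul_cancel, mul_inv_cancel, C2.one_snd, C2.one_fst] at h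
  have := h
  simpa using this.symm

/-- The central extension of `G` by `ZMod 2` determined by `c`. -/
def CE (_c : C2 G) : Type := ZMod 2 × G

instance : Group (CE c) where
  mul x y := (x.1 + y.1 + c.f (x.2, y.2), x.2 * y.2)
  one := (0, 1)
  inv x := (x.1 + c.f (x.2, x.2⁻¹), x.2⁻¹)
  mul_assoc x y z := by
    show (Prod.mk _ _ : CE c) = Prod.mk _ _
    have h := c.coc x.2 y.2 z.2
    refine Prod.ext ?_ (mul_assoc _ _ _)
    show x.1 + y.1 + c.f (x.2, y.2) + z.1 + c.f (x.2*y.2, z.2)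
       = x.1 + (y.1 + z.1 + c.f (y.2, z.2)) + c.f (x.2, y.2*z.2)
    linear_combination -h
  one_mul x := by
    refine Prod.ext ?_ (one_mul _)
    show 0 + x.1 + c.f (1, x.2) = x.1
    rw [c.one_fst, zero_add, add_zero]
  mul_one x := by
    refine Prod.ext ?_ (mul_one _)
    show x.1 + 0 + c.f (x.2, 1) = x.1
    rw [c.one_snd, add_zero, add_zero]
  inv_mul_cancel x := by
    refine Prod.ext ?_ (inv_mul_cancel _)
    show x.1 + c.f (x.2, x.2⁻¹) + x.1 + c.f (x.2⁻¹, x.2) = 0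
    rw [c.inv_pair]
    linear_combination z2_add_self x.1 + z2_add_self (c.f (x.2⁻¹, x.2))

lemma CE.mul_def (x y : CE c) :
    x * y = ((x.1 + y.1 + c.f (x.2, y.2), x.2 * y.2) : ZMod 2 × G) := rfl

lemma CE.one_def : (1 : CE c) = ((0, 1) : ZMod 2 × G) := rfl

@[simp] lemma CE.snd_mul (x y : CE c) : (x * y).2 = x.2 * y.2 := rfl
@[simp] lemma CE.snd_one : (1 : CE c).2 = 1 := rfl
@[simp] lemma CE.fst_mul (x y : CE c) : (x * y).1 = x.1 + y.1 + c.f (x.2, y.2) := rfl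

/-- Central elements. -/
def CE.ι (u : ZMod 2) : CE c := ((u, 1) : ZMod 2 × G)

@[simp] lemma CE.snd_ι (u : ZMod 2) : (CE.ι c u).2 = 1 := rfl
@[simp] lemma CE.fst_ι (u : ZMod 2) : (CE.ι c u).1 = u := rfl

lemma CE.ι_mul (u v : ZMod 2) : CE.ι c u * CE.ι c v = CE.ι c (u + v) := by
  show (Prod.mk _ _ : CE c) = _
  rw [CE.ι]
  refine Prod.ext ?_ (one_mul _)
  show u + v + c.f (1, 1) = u + v
  rw [c.nor, add_zero]

@[simp] lemma CE.ι_zero : CE.ι c 0 = 1 := rfl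

lemma CE.ι_comm (u : ZMod 2) (y : CE c) : Commute (CE.ι c u) y := by
  show CE.ι c u * y = y * CE.ι c u
  refine Prod.ext ?_ ?_
  · show u + y.1 + c.f (1, y.2) = y.1 + u + c.f (y.2, 1)
    rw [c.one_fst, c.one_snd, add_comm u y.1]
  · show 1 * y.2 = y.2 * 1
    rw [one_mul, mul_one]

lemma CE.fst_ι_mul (u : ZMod 2) (y : CE c) : (CE.ι c u * y).1 = u + y.1 := by
  show u + y.1 + c.f (1, y.2) = u + y.1
  rw [c.one_fst, add_zero]

lemma CE.eq_ι_of_snd_one (x : CE c) (h : x.2 = 1) : x = CE.ι c x.1 :=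
  Prod.ext rfl h

lemma CE.ι_pow (u : ZMod 2) (k : ℕ) : (CE.ι c u) ^ k = CE.ι c ((k : ZMod 2) * u) := by
  induction k with
  | zero => simp
  | succ m ih =>
      rw [pow_succ, ih, CE.ι_mul]
      congr 1
      push_cast
      ring

lemma CE.ι_inv (u : ZMod 2) : (CE.ι c u)⁻¹ = CE.ι c u := by
  rw [inv_eq_iff_mul_eq_one, CE.ι_mul, z2_add_self, CE.ι_zero]

/-- Projection to `G` is multiplicative. -/
lemma CE.snd_pow (x : CE c) (k : ℕ) : (x ^ k).2 = x.2 ^ k := by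
  induction k with
  | zero => rw [pow_zero, pow_zero]; rfl
  | succ m ih => rw [pow_succ, pow_succ, CE.snd_mul, ih]

end CE




/-- The reordering correction sum. -/
def DLW {ι : Type} (W : ι → ι → ZMod 2) : List ι → ZMod 2
  | [] => 0
  | i :: t => ((t.map (fun j => W i j)).sum) + DLW W t

lemma list_sum_add {ι : Type} (p q : ι → ZMod 2) (l : List ι) :
    (l.map (fun i => p i + q i)).sum = (l.map p).sum + (l.map q).sum := by
  induction l with
  | nil => simp
  | cons a s ih => simp only [List.map_cons, List.sum_cons, ih]; ring

lemma DLW_add {ι : Type} (W₁ W₂ : ι → ι → ZMod 2) (l : List ι) :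
    DLW (fun i j => W₁ i j + W₂ i j) l = DLW W₁ l + DLW W₂ l := by
  induction l with
  | nil => simp [DLW]
  | cons i t ih =>
      simp only [DLW, ih, list_sum_add (fun j => W₁ i j) (fun j => W₂ i j) t]
      ring

section Generic

variable {E : Type} [Group E] {ι : Type}
variable (I : ZMod 2 → E)
lemma cmove (hc : ∀ u (y : E), Commute (I u) y) (u : ZMod 2) (x y : E) :
    x * (I u * y) = I u * (x * y) := by
  rw [← mul_assoc, ← (hc u x).eq, mul_assoc]

lemma cjoin (hadd : ∀ u v, I u * I v = I (u + v)) (u v : ZMod 2) (y : E) :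
    I u * (I v * y) = I (u + v) * y := by
  rw [← mul_assoc, hadd]

variable (hc : ∀ u (y : E), Commute (I u) y) (hadd : ∀ u v, I u * I v = I (u + v))
  (hzero : I 0 = 1)

include hadd hzero in
lemma I_pow (u : ZMod 2) (k : ℕ) : (I u) ^ k = I ((k : ZMod 2) * u) := by
  induction k with
  | zero => simp [hzero]
  | succ m ih =>
      rw [pow_succ, ih, hadd]
      congr 1
      push_cast
      ring

include hadd hzero in
lemma I_self_mul (u : ZMod 2) : I u * I u = 1 := by
  rw [hadd, CharTwo.add_self_eq_zero, hzero]

include hc hadd hzero in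
/-- Conjugation of a power. -/
lemma conj_pow_eq (x a : E) (z : ZMod 2) (h : x * a * x⁻¹ = I z * a⁻¹) (k : ℕ) :
    x * a ^ k * x⁻¹ = I ((k : ZMod 2) * z) * (a⁻¹) ^ k := by
  have h1 : x * a ^ k * x⁻¹ = (x * a * x⁻¹) ^ k := by
    rw [show x * a * x⁻¹ = (MulAut.conj x) a from rfl, ← map_pow]
    rfl
  rw [h1, h, (hc z a⁻¹).mul_pow, I_pow I hadd hzero]

include hc hadd hzero in
/-- Commutation of powers when the commutator is central. -/
lemma comm_pow (a b : E) (z : ZMod 2) (h : a * b = I z * (b * a)) (k l : ℕ) :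
    a ^ k * b ^ l = I ((k * l : ℕ) * z) * (b ^ l * a ^ k) := by
  have key : ∀ m : ℕ, a * b ^ m = I ((m : ZMod 2) * z) * (b ^ m * a) := by
    intro m
    induction m with
    | zero => simp [hzero]
    | succ p ih =>
        calc a * b ^ (p+1) = (a * b ^ p) * b := by rw [pow_succ, mul_assoc]
          _ = (I ((p : ZMod 2) * z) * (b ^ p * a)) * b := by rw [ih]
          _ = I ((p : ZMod 2) * z) * (b ^ p * (a * b)) := by group
          _ = I ((p : ZMod 2) * z) * (b ^ p * (I z * (b * a))) := by rw [h]
          _ = I ((p : ZMod 2) * z) * (I z * (b ^ p * (b * a))) := by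
              rw [cmove I hc (z) (b ^ p)]
          _ = I ((p : ZMod 2) * z + z) * (b ^ p * (b * a)) := by
              rw [cjoin I hadd]
          _ = I (((p+1 : ℕ) : ZMod 2) * z) * (b ^ (p+1) * a) := by
              rw [show b ^ p * (b * a) = b ^ (p+1) * a by rw [pow_succ']; group]
              congr 2
              push_cast; ring
  induction k with
  | zero => simp [hzero]
  | succ p ih =>
      calc a ^ (p+1) * b ^ l = a ^ p * (a * b ^ l) := by rw [pow_succ']; group
        _ = a ^ p * (I ((l : ZMod 2) * z) * (b ^ l * a)) := by rw [key l]
        _ = I ((l : ZMod 2) * z) * (a ^ p * (b ^ l * a)) := by rw [cmove I hc]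
        _ = I ((l : ZMod 2) * z) * ((a ^ p * b ^ l) * a) := by group
        _ = I ((l : ZMod 2) * z) * ((I ((p * l : ℕ) * z) * (b ^ l * a ^ p)) * a) := by rw [ih]
        _ = I ((l : ZMod 2) * z) * (I ((p * l : ℕ) * z) * (b ^ l * a ^ p * a)) := by group
        _ = I ((l : ZMod 2) * z + (p * l : ℕ) * z) * (b ^ l * a ^ p * a) := by
            rw [cjoin I hadd]
        _ = I (((p+1) * l : ℕ) * z) * (b ^ l * a ^ (p+1)) := by
            rw [show b ^ l * a ^ p * a = b ^ l * a ^ (p+1) by rw [pow_succ]; group]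
            congr 2
            push_cast; ring

include hc hadd hzero in
/-- Pulling central factors out of a product over a list. -/
lemma prod_map_central_mul (co : ι → ZMod 2) (b : ι → E) :
    ∀ l : List ι, (l.map (fun i => I (co i) * b i)).prod
      = I ((l.map co).sum) * (l.map b).prod := by
  intro l
  induction l with
  | nil => simp [hzero]
  | cons i t ih =>
      simp only [List.map_cons, List.prod_cons, List.sum_cons]
      calc (I (co i) * b i) * ((t.map (fun i => I (co i) * b i)).prod)
          = I (co i) * (b i * ((t.map (fun i => I (co i) * b i)).prod)) := by group
        _ = I (co i) * (b i * (I ((t.map co).sum) * (t.map b).prod)) := by rw [ih]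
        _ = I (co i) * (I ((t.map co).sum) * (b i * (t.map b).prod)) := by
            rw [cmove I hc]
        _ = I (co i + (t.map co).sum) * (b i * (t.map b).prod) := by rw [cjoin I hadd]

include hc hadd hzero in
/-- Moving one element through a product over a list. -/
lemma mul_prod_map (a : E) (co : ι → ZMod 2) (b : ι → E)
    (h : ∀ i, a * b i = I (co i) * (b i * a)) :
    ∀ l : List ι, a * (l.map b).prod = I ((l.map co).sum) * ((l.map b).prod * a) := by
  intro l
  induction l with
  | nil => simp [hzero]
  | cons i t ih =>
      simp only [List.map_cons, List.prod_cons, List.sum_cons]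
      calc a * (b i * (t.map b).prod) = (a * b i) * (t.map b).prod := by group
        _ = (I (co i) * (b i * a)) * (t.map b).prod := by rw [h i]
        _ = I (co i) * (b i * (a * (t.map b).prod)) := by group
        _ = I (co i) * (b i * (I ((t.map co).sum) * ((t.map b).prod * a))) := by rw [ih]
        _ = I (co i) * (I ((t.map co).sum) * (b i * ((t.map b).prod * a))) := by
            rw [cmove I hc]
        _ = I (co i + (t.map co).sum) * (b i * (t.map b).prod * a) := by
            rw [cjoin I hadd]; group

include hc hadd hzero in
lemma prod_mul_prod (b b' : ι → E) (W : ι → ι → ZMod 2)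
    (hw : ∀ i j, b' i * b j = I (W i j) * (b j * b' i)) :
    ∀ l : List ι, (l.map b).prod * (l.map b').prod
      = I (DLW W l) * (l.map (fun i => b i * b' i)).prod := by
  intro l
  induction l with
  | nil => simp [DLW, hzero]
  | cons i t ih =>
      simp only [List.map_cons, List.prod_cons, DLW]
      set S := (t.map (fun j => W i j)).sum with hS
      have hmove := mul_prod_map I hc hadd hzero (b' i) (fun j => W i j) b
        (fun j => hw i j) t
      have hswap : (t.map b).prod * b' i = I S * (b' i * (t.map b).prod) := by
        have h2 : I S * (b' i * (t.map b).prod) = I S * (I S * ((t.map b).prod * b' i)) := by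
          rw [hmove]
        rw [cjoin I hadd, CharTwo.add_self_eq_zero, hzero, one_mul] at h2
        exact h2.symm
      calc (b i * (t.map b).prod) * (b' i * (t.map b').prod)
          = b i * (((t.map b).prod * b' i) * (t.map b').prod) := by group
        _ = b i * ((I S * (b' i * (t.map b).prod)) * (t.map b').prod) := by rw [hswap]
        _ = I S * (b i * (b' i * ((t.map b).prod * (t.map b').prod))) := by
            rw [show (I S * (b' i * (t.map b).prod)) * (t.map b').prod
                = I S * (b' i * ((t.map b).prod * (t.map b').prod)) by group]
            rw [cmove I hc]
        _ = I S * (b i * (b' i * (I (DLW W t) * (t.map (fun x => b x * b' x)).prod))) := by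
            rw [ih]
        _ = I S * (b i * (I (DLW W t) * (b' i * (t.map (fun x => b x * b' x)).prod))) := by
            rw [cmove I hc (DLW W t) (b' i)]
        _ = I S * (I (DLW W t) * (b i * (b' i * (t.map (fun x => b x * b' x)).prod))) := by
            rw [cmove I hc (DLW W t) (b i)]
        _ = I (S + DLW W t) * ((b i * b' i) * (t.map (fun x => b x * b' x)).prod) := by
            rw [cjoin I hadd]; group

end Generic




/-- Context: the group `A₂(n+1; d)`. -/
structure Ctx where
  n : ℕ
  d : ℕ
  φ : Multiplicative (ZMod 2) →* MulAut (Fin d → Multiplicative (ZMod (2 ^ (n + 1))))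
  hφ : ∀ y, φ (Multiplicative.ofAdd 1) y = y⁻¹

variable (C : Ctx)

/-- The group. -/
abbrev Ctx.G : Type :=
  (Fin C.d → Multiplicative (ZMod (2 ^ (C.n + 1)))) ⋊[C.φ] Multiplicative (ZMod 2)

abbrev Ctx.NN : ℕ := 2 ^ (C.n + 1)

lemma Ctx.NN_pos : 0 < C.NN := Nat.pow_pos (by norm_num)

lemma Ctx.two_dvd : 2 ∣ C.NN := dvd_pow_self 2 (Nat.succ_ne_zero C.n)

instance : NeZero C.NN := ⟨C.NN_pos.ne'⟩

def Ctx.eG (i : Fin C.d) : C.G :=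
  SemidirectProduct.inl (Pi.mulSingle i (Multiplicative.ofAdd (1 : ZMod C.NN)))

def Ctx.xG : C.G := SemidirectProduct.inr (Multiplicative.ofAdd (1 : ZMod 2))

/-- coordinate parity homomorphism values -/
def Ctx.prc (i : Fin C.d) (g : C.G) : ZMod 2 :=
  ZMod.castHom C.two_dvd (ZMod 2) (Multiplicative.toAdd (g.left i))

def Ctx.et (g : C.G) : ZMod 2 := Multiplicative.toAdd g.right

lemma zmod2_cases : ∀ z : ZMod 2, z = 0 ∨ z = 1 := by decide

lemma mult_zmod2_cases : ∀ ε : Multiplicative (ZMod 2),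
    ε = 1 ∨ ε = Multiplicative.ofAdd 1 := by decide

lemma Ctx.phi_apply_left (ε : Multiplicative (ZMod 2))
    (b : Fin C.d → Multiplicative (ZMod (2 ^ (C.n + 1)))) (i : Fin C.d) :
    ZMod.castHom C.two_dvd (ZMod 2) (Multiplicative.toAdd ((C.φ ε b) i))
      = ZMod.castHom C.two_dvd (ZMod 2) (Multiplicative.toAdd (b i)) := by
  rcases mult_zmod2_cases ε with h | h
  · rw [h, map_one]
    rfl
  · rw [h, C.hφ]
    show (ZMod.castHom C.two_dvd (ZMod 2)) (Multiplicative.toAdd ((b i)⁻¹)) = _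
    rw [toAdd_inv, map_neg, CharTwo.neg_eq]

lemma Ctx.prc_mul (i : Fin C.d) (g h : C.G) :
    C.prc i (g * h) = C.prc i g + C.prc i h := by
  show ZMod.castHom C.two_dvd (ZMod 2) (Multiplicative.toAdd (((g * h).left) i)) = _
  rw [mul_left]
  show (ZMod.castHom C.two_dvd (ZMod 2))
      (Multiplicative.toAdd (g.left i * (C.φ g.right h.left) i)) = _
  rw [toAdd_mul, map_add, C.phi_apply_left]
  rfl

lemma Ctx.et_mul (g h : C.G) : C.et (g * h) = C.et g + C.et h := by
  show Multiplicative.toAdd ((g * h).right) = _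
  rw [mul_right, toAdd_mul]
  rfl

lemma Ctx.et_one : C.et 1 = 0 := rfl

lemma Ctx.eG_pow (i : Fin C.d) (k : ℕ) :
    C.eG i ^ k = SemidirectProduct.inl (Pi.mulSingle i (Multiplicative.ofAdd (k : ZMod C.NN))) := by
  rw [Ctx.eG, ← map_pow]
  congr 1
  rw [← Pi.mulSingle_pow]
  congr 1
  rw [← ofAdd_nsmul, nsmul_eq_mul, mul_one]

lemma Ctx.eG_pow_NN (i : Fin C.d) : C.eG i ^ C.NN = 1 := by
  rw [C.eG_pow, ZMod.natCast_self, ofAdd_zero, Pi.mulSingle_one, map_one]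

lemma Ctx.xG_pow (k : ℕ) :
    C.xG ^ k = SemidirectProduct.inr (Multiplicative.ofAdd (k : ZMod 2)) := by
  rw [Ctx.xG, ← map_pow]
  congr 1
  rw [← ofAdd_nsmul, nsmul_eq_mul, mul_one]

lemma Ctx.xG_sq : C.xG * C.xG = 1 := by
  rw [Ctx.xG, ← map_mul]
  have : Multiplicative.ofAdd (1 : ZMod 2) * Multiplicative.ofAdd (1 : ZMod 2) = 1 := by decide
  rw [this, map_one]

lemma Ctx.xG_conj (i : Fin C.d) : C.xG * C.eG i * C.xG⁻¹ = (C.eG i)⁻¹ := by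
  rw [Ctx.xG, Ctx.eG,
    show (SemidirectProduct.inr (Multiplicative.ofAdd (1 : ZMod 2)) : C.G)⁻¹
      = SemidirectProduct.inr (Multiplicative.ofAdd (1 : ZMod 2))⁻¹ from (map_inv _ _).symm,
    ← inl_aut, C.hφ, map_inv]

lemma Ctx.eG_comm (i j : Fin C.d) : C.eG i * C.eG j = C.eG j * C.eG i := by
  rw [Ctx.eG, Ctx.eG, ← map_mul, ← map_mul, mul_comm]

/-- exponent vector -/
def Ctx.mv (g : C.G) (i : Fin C.d) : ℕ := (Multiplicative.toAdd (g.left i)).val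

def Ctx.ev (g : C.G) : ℕ := (Multiplicative.toAdd g.right).val

lemma Ctx.prc_of_val (i : Fin C.d) (g : C.G) : ((C.mv g i : ℕ) : ZMod 2) = C.prc i g := by
  rw [Ctx.mv, Ctx.prc, ZMod.castHom_apply, ← ZMod.natCast_val]

lemma Ctx.et_of_val (g : C.G) : ((C.ev g : ℕ) : ZMod 2) = C.et g := by
  rw [Ctx.ev, Ctx.et, ZMod.natCast_val, ZMod.cast_id]

lemma Ctx.mv_cast (g : C.G) (i : Fin C.d) :
    ((C.mv g i : ℕ) : ZMod C.NN) = Multiplicative.toAdd (g.left i) := by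
  rw [Ctx.mv, ZMod.natCast_val, ZMod.cast_id]

/-- Generation: every element is a product of the generators. -/
lemma Ctx.gen (g : C.G) :
    ((List.finRange C.d).map (fun i => C.eG i ^ C.mv g i)).prod * C.xG ^ C.ev g = g := by
  have h1 : ((List.finRange C.d).map (fun i => C.eG i ^ C.mv g i)).prod
      = SemidirectProduct.inl g.left := by
    have hitem : (fun i => C.eG i ^ C.mv g i)
        = fun i => SemidirectProduct.inl (Pi.mulSingle i (g.left i)) := by
      funext i
      rw [C.eG_pow, C.mv_cast, ofAdd_toAdd]
    rw [hitem]
    rw [show (fun i => (SemidirectProduct.inl (Pi.mulSingle i (g.left i)) : C.G))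
        = (SemidirectProduct.inl ∘ fun i => Pi.mulSingle i (g.left i)) from rfl]
    rw [← List.map_map, ← map_list_prod, ← Fin.prod_univ_def, Finset.univ_prod_mulSingle]
  have h2 : C.xG ^ C.ev g = SemidirectProduct.inr g.right := by
    rw [C.xG_pow, Ctx.ev, ZMod.natCast_val, ZMod.cast_id, ofAdd_toAdd]
  rw [h1, h2, inl_left_mul_inr_right]


section Elevel

variable {C : Ctx} (c : C2 C.G)

def aE (i : Fin C.d) : CE c := ((0 : ZMod 2), C.eG i)
def xE : CE c := ((0 : ZMod 2), C.xG)

def sndH : CE c →* C.G where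
  toFun := fun x => x.2
  map_one' := rfl
  map_mul' := fun _ _ => rfl

lemma CE.snd_inv (x : CE c) : (x⁻¹).2 = x.2⁻¹ := rfl

lemma aE_order (hEi : ∀ i, c.f (C.eG i ^ 2 ^ C.n, C.eG i ^ 2 ^ C.n) = 0) (i : Fin C.d) :
    aE c i ^ C.NN = 1 := by
  have hNN : C.NN = 2 ^ C.n * 2 := by show 2 ^ (C.n + 1) = 2 ^ C.n * 2; rw [pow_succ]
  set s := aE c i ^ 2 ^ C.n with hs
  have hs2 : s.2 = C.eG i ^ 2 ^ C.n := by rw [hs, CE.snd_pow]; rfl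
  have hss : s * s = 1 := by
    refine Prod.ext ?_ ?_
    · show s.1 + s.1 + c.f (s.2, s.2) = (0 : ZMod 2)
      rw [hs2, hEi i, z2_add_self, add_zero]
    · show s.2 * s.2 = 1
      rw [hs2, ← pow_add, show 2 ^ C.n + 2 ^ C.n = C.NN by rw [hNN]; ring]
      exact C.eG_pow_NN i
  calc aE c i ^ C.NN = (aE c i ^ 2 ^ C.n) ^ 2 := by rw [← pow_mul, ← hNN]
    _ = s * s := by rw [pow_two]
    _ = 1 := hss

lemma aE_inv (hEi : ∀ i, c.f (C.eG i ^ 2 ^ C.n, C.eG i ^ 2 ^ C.n) = 0) (i : Fin C.d) :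
    (aE c i)⁻¹ = aE c i ^ (C.NN - 1) := by
  refine inv_eq_of_mul_eq_one_right ?_
  rw [← pow_succ', Nat.sub_add_cancel C.NN_pos]
  exact aE_order c hEi i

lemma aE_pow_mod (hEi : ∀ i, c.f (C.eG i ^ 2 ^ C.n, C.eG i ^ 2 ^ C.n) = 0) (i : Fin C.d)
    (k : ℕ) : aE c i ^ k = aE c i ^ (k % C.NN) :=
  pow_eq_pow_mod k (aE_order c hEi i)

def wc (i j : Fin C.d) : ZMod 2 := c.f (C.eG i, C.eG j) + c.f (C.eG j, C.eG i)

lemma aE_comm (i j : Fin C.d) :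
    aE c i * aE c j = CE.ι c (wc c i j) * (aE c j * aE c i) := by
  refine Prod.ext ?_ ?_
  · rw [CE.fst_ι_mul, CE.fst_mul, CE.fst_mul]
    show (0 : ZMod 2) + 0 + c.f (C.eG i, C.eG j)
      = wc c i j + ((0 : ZMod 2) + 0 + c.f (C.eG j, C.eG i))
    simp only [zero_add]
    rw [wc, add_assoc, z2_add_self, add_zero]
  · show (aE c i).2 * (aE c j).2 = (CE.ι c (wc c i j) * (aE c j * aE c i)).2
    rw [CE.snd_mul, CE.snd_ι, one_mul, CE.snd_mul]
    exact C.eG_comm i j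

def zc (i : Fin C.d) : ZMod 2 := (xE c * aE c i * (xE c)⁻¹ * aE c i).1

lemma conj_aE (i : Fin C.d) :
    xE c * aE c i * (xE c)⁻¹ = CE.ι c (zc c i) * (aE c i)⁻¹ := by
  have hsnd : (xE c * aE c i * (xE c)⁻¹ * aE c i).2 = 1 := by
    rw [CE.snd_mul, CE.snd_mul, CE.snd_mul, CE.snd_inv]
    show C.xG * C.eG i * C.xG⁻¹ * C.eG i = 1
    rw [C.xG_conj, inv_mul_cancel]
  have h1 : xE c * aE c i * (xE c)⁻¹ * aE c i = CE.ι c (zc c i) :=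
    CE.eq_ι_of_snd_one c _ hsnd
  calc xE c * aE c i * (xE c)⁻¹
      = (xE c * aE c i * (xE c)⁻¹ * aE c i) * (aE c i)⁻¹ := by group
    _ = CE.ι c (zc c i) * (aE c i)⁻¹ := by rw [h1]

def vc : ZMod 2 := c.f (C.xG, C.xG)

lemma xE_sq : xE c * xE c = CE.ι c (vc c) := by
  refine Prod.ext ?_ ?_
  · show (0 : ZMod 2) + 0 + c.f (C.xG, C.xG) = vc c
    rw [vc, zero_add, zero_add]
  · show C.xG * C.xG = 1
    exact C.xG_sq

lemma aE_pow_comm (i j : Fin C.d) (a b : ℕ) :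
    aE c i ^ a * aE c j ^ b
      = CE.ι c ((a : ZMod 2) * (b : ZMod 2) * wc c i j) * (aE c j ^ b * aE c i ^ a) := by
  have h := comm_pow (CE.ι c) (CE.ι_comm c) (CE.ι_mul c) (CE.ι_zero c)
    (aE c i) (aE c j) (wc c i j) (aE_comm c i j) a b
  rw [h]
  congr 2
  push_cast
  ring

lemma conj_aE_pow (hEi : ∀ i, c.f (C.eG i ^ 2 ^ C.n, C.eG i ^ 2 ^ C.n) = 0) (i : Fin C.d)
    (k : ℕ) : xE c * aE c i ^ k * (xE c)⁻¹
      = CE.ι c ((k : ZMod 2) * zc c i) * aE c i ^ ((C.NN - 1) * k) := by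
  have h := conj_pow_eq (CE.ι c) (CE.ι_comm c) (CE.ι_mul c) (CE.ι_zero c)
    (xE c) (aE c i) (zc c i) (conj_aE c i) k
  rw [h, aE_inv c hEi i, ← pow_mul]

def QE (m : Fin C.d → ℕ) : CE c := ((List.finRange C.d).map (fun i => aE c i ^ m i)).prod

lemma QE_snd (m : Fin C.d → ℕ) :
    (QE c m).2 = ((List.finRange C.d).map (fun i => C.eG i ^ m i)).prod := by
  show sndH c (((List.finRange C.d).map (fun i => aE c i ^ m i)).prod) = _
  rw [map_list_prod, List.map_map]
  have hfun : ((sndH c) ∘ fun i => aE c i ^ m i) = fun i => C.eG i ^ m i := by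
    funext i
    show (aE c i ^ m i).2 = _
    rw [CE.snd_pow]
    rfl
  rw [hfun]

lemma QE_congr (hEi : ∀ i, c.f (C.eG i ^ 2 ^ C.n, C.eG i ^ 2 ^ C.n) = 0)
    (m m' : Fin C.d → ℕ) (hmm : ∀ i, (m i : ZMod C.NN) = (m' i : ZMod C.NN)) :
    QE c m = QE c m' := by
  unfold QE
  have hfn : (fun i => aE c i ^ m i) = (fun i => aE c i ^ m' i) := by
    funext i
    have hmod : m i % C.NN = m' i % C.NN := (ZMod.natCast_eq_natCast_iff' _ _ _).1 (hmm i)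
    rw [aE_pow_mod c hEi i (m i), aE_pow_mod c hEi i (m' i), hmod]
  rw [hfn]

lemma QE_mul (m m' : Fin C.d → ℕ) :
    QE c m * QE c m'
      = CE.ι c (DLW (fun i j => (m' i : ZMod 2) * (m j : ZMod 2) * wc c i j)
          (List.finRange C.d)) * QE c (fun i => m i + m' i) := by
  have h := prod_mul_prod (CE.ι c) (CE.ι_comm c) (CE.ι_mul c) (CE.ι_zero c)
    (fun i => aE c i ^ m i) (fun i => aE c i ^ m' i)
    (fun i j => (m' i : ZMod 2) * (m j : ZMod 2) * wc c i j)
    (fun i j => aE_pow_comm c i j (m' i) (m j)) (List.finRange C.d)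
  have hfn : (fun i => aE c i ^ m i * aE c i ^ m' i)
      = (fun i => aE c i ^ (m i + m' i)) := by
    funext i
    exact (pow_add _ _ _).symm
  rw [QE, QE, h, hfn]
  rfl

lemma conj_QE (hEi : ∀ i, c.f (C.eG i ^ 2 ^ C.n, C.eG i ^ 2 ^ C.n) = 0) (m : Fin C.d → ℕ) :
    xE c * QE c m * (xE c)⁻¹
      = CE.ι c (((List.finRange C.d).map (fun i => (m i : ZMod 2) * zc c i)).sum)
          * QE c (fun i => (C.NN - 1) * m i) := by
  have h1 : xE c * QE c m * (xE c)⁻¹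
      = ((List.finRange C.d).map (fun i => xE c * aE c i ^ m i * (xE c)⁻¹)).prod := by
    show (MulAut.conj (xE c)) (QE c m) = _
    rw [QE, map_list_prod, List.map_map]
    rfl
  rw [h1]
  have h2 : (fun i => xE c * aE c i ^ m i * (xE c)⁻¹)
      = fun i => CE.ι c ((m i : ZMod 2) * zc c i) * aE c i ^ ((C.NN - 1) * m i) := by
    funext i
    exact conj_aE_pow c hEi i (m i)
  rw [h2, prod_map_central_mul (CE.ι c) (CE.ι_comm c) (CE.ι_mul c) (CE.ι_zero c)
    (fun i => (m i : ZMod 2) * zc c i) (fun i => aE c i ^ ((C.NN - 1) * m i))]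
  rfl

def sE (g : C.G) : CE c := QE c (C.mv g) * xE c ^ (C.ev g)

def φ0 (g : C.G) : ZMod 2 := (sE c g).1

lemma sE_snd (g : C.G) : (sE c g).2 = g := by
  rw [sE, CE.snd_mul, QE_snd, CE.snd_pow]
  exact C.gen g

end Elevel
section Core

variable {C : Ctx} (c : C2 C.G)

def Szf (h : C.G) : ZMod 2 := ((List.finRange C.d).map (fun i => C.prc i h * zc c i)).sum

def Wf (g h : C.G) : Fin C.d → Fin C.d → ZMod 2 :=
  fun i j => C.prc i h * C.prc j g * wc c i j

/-- The decomposable bilinear form. -/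
def CF (g h : C.G) : ZMod 2 :=
  vc c * (C.et g * C.et h) + C.et g * Szf c h + DLW (Wf c g h) (List.finRange C.d)

lemma NN_cast2 : ((C.NN : ℕ) : ZMod 2) = 0 := by
  rw [ZMod.natCast_eq_zero_iff]
  exact C.two_dvd

lemma NN1_cast2 : ((C.NN - 1 : ℕ) : ZMod 2) = 1 := by
  rw [Nat.cast_sub C.NN_pos, NN_cast2]
  rw [Nat.cast_one, zero_sub, CharTwo.neg_eq]

lemma NN1_castNN : ((C.NN - 1 : ℕ) : ZMod C.NN) = -1 := by
  rw [Nat.cast_sub C.NN_pos, ZMod.natCast_self, Nat.cast_one, zero_sub]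

lemma Ctx.toAdd_mul_left (g h : C.G) (i : Fin C.d) :
    Multiplicative.toAdd ((g * h).left i)
      = Multiplicative.toAdd (g.left i) + Multiplicative.toAdd ((C.φ g.right h.left) i) := by
  rw [mul_left, Pi.mul_apply, toAdd_mul]

lemma Ctx.phi_toAdd_zero (g h : C.G) (i : Fin C.d) (hg : Multiplicative.toAdd g.right = 0) :
    Multiplicative.toAdd ((C.φ g.right h.left) i) = Multiplicative.toAdd (h.left i) := by
  have hg1 : g.right = 1 := by
    rw [← ofAdd_toAdd g.right, hg, ofAdd_zero]
  rw [hg1, map_one]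
  rfl

lemma Ctx.phi_toAdd_one (g h : C.G) (i : Fin C.d) (hg : Multiplicative.toAdd g.right = 1) :
    Multiplicative.toAdd ((C.φ g.right h.left) i) = - Multiplicative.toAdd (h.left i) := by
  have hg1 : g.right = Multiplicative.ofAdd 1 := by
    rw [← ofAdd_toAdd g.right, hg]
  rw [hg1, C.hφ, Pi.inv_apply, toAdd_inv]

/-- The key identity: the section discrepancy is the bilinear form `CF`. -/
lemma sE_mul (hEi : ∀ i, c.f (C.eG i ^ 2 ^ C.n, C.eG i ^ 2 ^ C.n) = 0) (g h : C.G) :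
    sE c g * sE c h = CE.ι c (CF c g h) * sE c (g * h) := by
  have hWcast : (fun i j => ((C.mv h i : ℕ) : ZMod 2) * ((C.mv g j : ℕ) : ZMod 2) * wc c i j)
      = Wf c g h := by
    funext i j
    rw [C.prc_of_val, C.prc_of_val]
    rfl
  rcases zmod2_cases (Multiplicative.toAdd g.right) with hg0 | hg1
  · -- case: g has trivial C2-component
    have hevg : C.ev g = 0 := by rw [Ctx.ev, hg0]; decide
    have hetg : C.et g = 0 := hg0
    have h3 : QE c (fun i => C.mv g i + C.mv h i) = QE c (C.mv (g * h)) := by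
      refine QE_congr c hEi _ _ (fun i => ?_)
      push_cast
      rw [C.mv_cast, C.mv_cast, C.mv_cast, C.toAdd_mul_left, C.phi_toAdd_zero g h i hg0]
    have h4 : C.ev h = C.ev (g * h) := by
      rw [Ctx.ev, Ctx.ev, mul_right, toAdd_mul, hg0, zero_add]
    have hCF : CF c g h = DLW (Wf c g h) (List.finRange C.d) := by
      rw [CF, hetg]
      ring
    calc sE c g * sE c h
        = QE c (C.mv g) * QE c (C.mv h) * xE c ^ C.ev h := by
          rw [sE, sE, hevg, pow_zero, mul_one, mul_assoc]
      _ = CE.ι c (DLW (Wf c g h) (List.finRange C.d))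
            * QE c (fun i => C.mv g i + C.mv h i) * xE c ^ C.ev h := by
          rw [QE_mul, hWcast]
      _ = CE.ι c (CF c g h) * (QE c (C.mv (g * h)) * xE c ^ C.ev (g * h)) := by
          rw [h3, h4, hCF, mul_assoc]
      _ = CE.ι c (CF c g h) * sE c (g * h) := by rw [sE]
  · -- case: g has nontrivial C2-component
    have hevg : C.ev g = 1 := by rw [Ctx.ev, hg1]; decide
    have hetg : C.et g = 1 := hg1
    set Sm : ZMod 2 := ((List.finRange C.d).map (fun i => ((C.mv h i : ℕ) : ZMod 2) * zc c i)).sum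
      with hSm
    have hSzf : Sm = Szf c h := by
      have hfi : (fun i => ((C.mv h i : ℕ) : ZMod 2) * zc c i)
          = fun i => C.prc i h * zc c i := by
        funext i
        rw [C.prc_of_val]
      rw [hSm, Szf, hfi]
    set mh' : Fin C.d → ℕ := fun i => (C.NN - 1) * C.mv h i with hmh'
    have hW' : (fun i j => ((mh' i : ℕ) : ZMod 2) * ((C.mv g j : ℕ) : ZMod 2) * wc c i j)
        = Wf c g h := by
      funext i j
      rw [hmh']
      push_cast
      rw [NN1_cast2, one_mul, C.prc_of_val, C.prc_of_val]
      rfl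
    have h3 : QE c (fun i => C.mv g i + mh' i) = QE c (C.mv (g * h)) := by
      refine QE_congr c hEi _ _ (fun i => ?_)
      rw [hmh']
      push_cast
      rw [NN1_castNN, C.mv_cast, C.mv_cast, C.mv_cast, C.toAdd_mul_left,
        C.phi_toAdd_one g h i hg1]
      ring
    have step1 : sE c g * sE c h
        = QE c (C.mv g) * (xE c * QE c (C.mv h) * (xE c)⁻¹ * (xE c * xE c ^ C.ev h)) := by
      rw [sE, sE, hevg, pow_one]
      group
    have step2 : sE c g * sE c h
        = CE.ι c (Sm + DLW (Wf c g h) (List.finRange C.d))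
            * (QE c (C.mv (g * h)) * (xE c * xE c ^ C.ev h)) := by
      rw [step1, conj_QE c hEi (C.mv h), ← hSm, ← hmh']
      calc QE c (C.mv g) * (CE.ι c Sm * QE c mh' * (xE c * xE c ^ C.ev h))
          = QE c (C.mv g) * (CE.ι c Sm * (QE c mh' * (xE c * xE c ^ C.ev h))) := by
            rw [mul_assoc]
        _ = CE.ι c Sm * (QE c (C.mv g) * (QE c mh' * (xE c * xE c ^ C.ev h))) := by
            rw [cmove (CE.ι c) (CE.ι_comm c)]
        _ = CE.ι c Sm * (QE c (C.mv g) * QE c mh' * (xE c * xE c ^ C.ev h)) := by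
            rw [mul_assoc]
        _ = CE.ι c Sm * (CE.ι c (DLW (Wf c g h) (List.finRange C.d))
              * QE c (fun i => C.mv g i + mh' i) * (xE c * xE c ^ C.ev h)) := by
            rw [QE_mul, hW']
        _ = CE.ι c Sm * (CE.ι c (DLW (Wf c g h) (List.finRange C.d))
              * (QE c (fun i => C.mv g i + mh' i) * (xE c * xE c ^ C.ev h))) := by
            rw [mul_assoc]
        _ = CE.ι c (Sm + DLW (Wf c g h) (List.finRange C.d))
              * (QE c (fun i => C.mv g i + mh' i) * (xE c * xE c ^ C.ev h)) := by
            rw [cjoin (CE.ι c) (CE.ι_mul c)]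
        _ = CE.ι c (Sm + DLW (Wf c g h) (List.finRange C.d))
              * (QE c (C.mv (g * h)) * (xE c * xE c ^ C.ev h)) := by rw [h3]
    rcases zmod2_cases (Multiplicative.toAdd h.right) with hh0 | hh1
    · -- h trivial C2-component
      have hevh : C.ev h = 0 := by rw [Ctx.ev, hh0]; decide
      have heth : C.et h = 0 := hh0
      have hevgh : C.ev (g * h) = 1 := by
        rw [Ctx.ev, mul_right, toAdd_mul, hg1, hh0]
        decide
      have hCF : CF c g h = Sm + DLW (Wf c g h) (List.finRange C.d) := by
        rw [CF, hetg, heth, hSzf]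
        ring
      rw [step2, hevh, pow_zero, mul_one, hCF, sE, hevgh, pow_one]
    · -- h nontrivial C2-component
      have hevh : C.ev h = 1 := by rw [Ctx.ev, hh1]; decide
      have heth : C.et h = 1 := hh1
      have hevgh : C.ev (g * h) = 0 := by
        rw [Ctx.ev, mul_right, toAdd_mul, hg1, hh1]
        decide
      have hCF : CF c g h = Sm + DLW (Wf c g h) (List.finRange C.d) + vc c := by
        rw [CF, hetg, heth, hSzf]
        ring
      rw [step2, hevh, pow_one, xE_sq]
      calc CE.ι c (Sm + DLW (Wf c g h) (List.finRange C.d))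
            * (QE c (C.mv (g * h)) * CE.ι c (vc c))
          = CE.ι c (Sm + DLW (Wf c g h) (List.finRange C.d))
            * (CE.ι c (vc c) * QE c (C.mv (g * h))) := by
            rw [(CE.ι_comm c (vc c) (QE c (C.mv (g * h)))).eq]
        _ = CE.ι c (Sm + DLW (Wf c g h) (List.finRange C.d) + vc c)
            * QE c (C.mv (g * h)) := by
            rw [cjoin (CE.ι c) (CE.ι_mul c)]
        _ = CE.ι c (CF c g h) * sE c (g * h) := by
            rw [hCF, sE, hevgh, pow_zero, mul_one]

/-- The cocycle equals `CF` plus an explicit coboundary. -/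
lemma cf_eq (hEi : ∀ i, c.f (C.eG i ^ 2 ^ C.n, C.eG i ^ 2 ^ C.n) = 0) (g h : C.G) :
    c.f (g, h) = CF c g h + (φ0 c g + φ0 c h + φ0 c (g * h)) := by
  have h1 : (sE c g * sE c h).1 = φ0 c g + φ0 c h + c.f (g, h) := by
    rw [CE.fst_mul, sE_snd, sE_snd]
    rfl
  have h2 : (CE.ι c (CF c g h) * sE c (g * h)).1 = CF c g h + φ0 c (g * h) := by
    rw [CE.fst_ι_mul]
    rfl
  have h3 : φ0 c g + φ0 c h + c.f (g, h) = CF c g h + φ0 c (g * h) := by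
    rw [← h1, ← h2, sE_mul c hEi]
  have h22 : (2 : ZMod 2) = 0 := by decide
  linear_combination h3 - (φ0 c g + φ0 c h) * h22

end Core
section Bimult

variable {C : Ctx} (c : C2 C.G)

lemma CF_mul_left (g₁ g₂ h : C.G) : CF c (g₁ * g₂) h = CF c g₁ h + CF c g₂ h := by
  have hw : Wf c (g₁ * g₂) h = fun i j => Wf c g₁ h i j + Wf c g₂ h i j := by
    funext i j
    simp only [Wf]
    rw [C.prc_mul]
    ring
  simp only [CF]
  rw [hw, DLW_add, C.et_mul]
  ring

lemma CF_mul_right (g h₁ h₂ : C.G) : CF c g (h₁ * h₂) = CF c g h₁ + CF c g h₂ := by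
  have hw : Wf c g (h₁ * h₂) = fun i j => Wf c g h₁ i j + Wf c g h₂ i j := by
    funext i j
    simp only [Wf]
    rw [C.prc_mul]
    ring
  have hs : Szf c (h₁ * h₂) = Szf c h₁ + Szf c h₂ := by
    simp only [Szf]
    have hfi : (fun i => C.prc i (h₁ * h₂) * zc c i)
        = fun i => C.prc i h₁ * zc c i + C.prc i h₂ * zc c i := by
      funext i
      rw [C.prc_mul]
      ring
    rw [hfi, list_sum_add]
  simp only [CF]
  rw [hw, DLW_add, C.et_mul, hs]
  ring

lemma CF_one_left (h : C.G) : CF c 1 h = 0 := by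
  have h1 := CF_mul_left c 1 1 h
  rw [one_mul] at h1
  have h2 : CF c 1 h + CF c 1 h = CF c 1 h + 0 := by rw [add_zero, ← h1]
  exact (add_left_cancel h2)

lemma CF_one_right (g : C.G) : CF c g 1 = 0 := by
  have h1 := CF_mul_right c g 1 1
  rw [one_mul] at h1
  have h2 : CF c g 1 + CF c g 1 = CF c g 1 + 0 := by rw [add_zero, ← h1]
  exact (add_left_cancel h2)

lemma CF_pow_left (a h : C.G) (k : ℕ) : CF c (a ^ k) h = (k : ZMod 2) * CF c a h := by
  induction k with
  | zero => rw [pow_zero, CF_one_left, Nat.cast_zero, zero_mul]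
  | succ p ih =>
      rw [pow_succ, CF_mul_left, ih]
      push_cast
      ring

lemma CF_pow_right (g a : C.G) (k : ℕ) : CF c g (a ^ k) = (k : ZMod 2) * CF c g a := by
  induction k with
  | zero => rw [pow_zero, CF_one_right, Nat.cast_zero, zero_mul]
  | succ p ih =>
      rw [pow_succ, CF_mul_right, ih]
      push_cast
      ring

lemma CF_prod_left (b : Fin C.d → C.G) (h : C.G) (l : List (Fin C.d)) :
    CF c ((l.map b).prod) h = (l.map (fun i => CF c (b i) h)).sum := by
  induction l with
  | nil => simpa using CF_one_left c h
  | cons i t ih =>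
      simp only [List.map_cons, List.prod_cons, List.sum_cons]
      rw [CF_mul_left, ih]

lemma CF_prod_right (g : C.G) (b : Fin C.d → C.G) (l : List (Fin C.d)) :
    CF c g ((l.map b).prod) = (l.map (fun i => CF c g (b i))).sum := by
  induction l with
  | nil => simpa using CF_one_right c g
  | cons i t ih =>
      simp only [List.map_cons, List.prod_cons, List.sum_cons]
      rw [CF_mul_right, ih]

lemma CF_step1 (g h : C.G) :
    CF c g h = (∑ i : Fin C.d, C.prc i g * CF c (C.eG i) h) + C.et g * CF c C.xG h := by
  conv_lhs => rw [← C.gen g]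
  rw [CF_mul_left, CF_prod_left, CF_pow_left]
  have hfi : (fun i => CF c (C.eG i ^ C.mv g i) h)
      = fun i => C.prc i g * CF c (C.eG i) h := by
    funext i
    rw [CF_pow_left, C.prc_of_val]
  rw [hfi, ← Fin.sum_univ_def, C.et_of_val]

lemma CF_step2 (a h : C.G) :
    CF c a h = (∑ j : Fin C.d, C.prc j h * CF c a (C.eG j)) + C.et h * CF c a C.xG := by
  conv_lhs => rw [← C.gen h]
  rw [CF_mul_right, CF_prod_right, CF_pow_right]
  have hfi : (fun j => CF c a (C.eG j ^ C.mv h j))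
      = fun j => C.prc j h * CF c a (C.eG j) := by
    funext j
    rw [CF_pow_right, C.prc_of_val]
  rw [hfi, ← Fin.sum_univ_def, C.et_of_val]

def γv (C : Ctx) : Fin (C.d + 1) → C.G := Fin.snoc C.eG C.xG

def ΧF (C : Ctx) : Fin (C.d + 1) → C.G → ZMod 2 := Fin.snoc C.prc C.et

lemma ΧF_mul (α : Fin (C.d + 1)) (g h : C.G) : ΧF C α (g * h) = ΧF C α g + ΧF C α h := by
  induction α using Fin.lastCases with
  | last => rw [ΧF, Fin.snoc_last]; exact C.et_mul g h
  | cast i => rw [ΧF, Fin.snoc_castSucc]; exact C.prc_mul i g h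

lemma CF_snoc1 (g h : C.G) :
    CF c g h = ∑ α : Fin (C.d + 1), ΧF C α g * CF c (γv C α) h := by
  rw [Fin.sum_univ_castSucc]
  simp only [ΧF, γv, Fin.snoc_castSucc, Fin.snoc_last]
  exact CF_step1 c g h

lemma CF_snoc2 (a h : C.G) :
    CF c a h = ∑ β : Fin (C.d + 1), ΧF C β h * CF c a (γv C β) := by
  rw [Fin.sum_univ_castSucc]
  simp only [ΧF, γv, Fin.snoc_castSucc, Fin.snoc_last]
  exact CF_step2 c a h

lemma CF_expand (g h : C.G) :
    CF c g h = ∑ α : Fin (C.d + 1), ∑ β : Fin (C.d + 1),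
      (ΧF C α g * CF c (γv C α) (γv C β)) * ΧF C β h := by
  rw [CF_snoc1 c g h]
  refine Finset.sum_congr rfl (fun α _ => ?_)
  rw [CF_snoc2 c (γv C α) h, Finset.mul_sum]
  refine Finset.sum_congr rfl (fun β _ => ?_)
  ring

lemma chi_hom' (p : Fin ((C.d + 1) * (C.d + 1))) (a b : C.G) :
    ΧF C (finProdFinEquiv.symm p).1 (a * b)
      * CF c (γv C (finProdFinEquiv.symm p).1) (γv C (finProdFinEquiv.symm p).2)
    = ΧF C (finProdFinEquiv.symm p).1 a
        * CF c (γv C (finProdFinEquiv.symm p).1) (γv C (finProdFinEquiv.symm p).2)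
      + ΧF C (finProdFinEquiv.symm p).1 b
        * CF c (γv C (finProdFinEquiv.symm p).1) (γv C (finProdFinEquiv.symm p).2) := by
  rw [ΧF_mul]
  ring

lemma psi_hom' (C : Ctx) (p : Fin ((C.d + 1) * (C.d + 1))) (a b : C.G) :
    ΧF C (finProdFinEquiv.symm p).2 (a * b)
      = ΧF C (finProdFinEquiv.symm p).2 a + ΧF C (finProdFinEquiv.symm p).2 b :=
  ΧF_mul _ a b

lemma sum_expand (g h : C.G) :
    (∑ p : Fin ((C.d + 1) * (C.d + 1)),
      ΧF C (finProdFinEquiv.symm p).1 g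
        * CF c (γv C (finProdFinEquiv.symm p).1) (γv C (finProdFinEquiv.symm p).2)
        * ΧF C (finProdFinEquiv.symm p).2 h) = CF c g h := by
  have h1 : ∑ q : Fin (C.d + 1) × Fin (C.d + 1),
      ΧF C q.1 g * CF c (γv C q.1) (γv C q.2) * ΧF C q.2 h
      = ∑ p : Fin ((C.d + 1) * (C.d + 1)),
          ΧF C (finProdFinEquiv.symm p).1 g
            * CF c (γv C (finProdFinEquiv.symm p).1) (γv C (finProdFinEquiv.symm p).2)
            * ΧF C (finProdFinEquiv.symm p).2 h := by
    refine Fintype.sum_equiv finProdFinEquiv _ _ (fun q => ?_)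
    rw [Equiv.symm_apply_apply]
  rw [← h1, Fintype.sum_prod_type]
  exact (CF_expand c g h).symm

end Bimult
lemma mult_zmod_pow_self (m : ℕ) (a : Multiplicative (ZMod m)) : a ^ m = 1 := by
  rw [← ofAdd_toAdd a, ← ofAdd_nsmul, nsmul_eq_mul, ZMod.natCast_self, zero_mul, ofAdd_zero]

end Stmt17P

set_option maxHeartbeats 2000000 in
/-- Under inflation along the natural surjection `A₂(n+1;d) → A₂(n;d)` (where
`A₂(n;d) = (Z/2ⁿ)ᵈ ⋊ Z/2` with the inversion action), every degree-two cohomology class fully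
decomposes: its image is, up to a coboundary, a finite sum of cup products of two degree-one
classes. -/
theorem stmt17 (n d : ℕ) (hn : 2 ≤ n) (hd : 1 ≤ d)
    (φn : Multiplicative (ZMod 2) →* MulAut (Fin d → Multiplicative (ZMod (2 ^ n))))
    (hφn : ∀ y, φn (Multiplicative.ofAdd 1) y = y⁻¹)
    (φn1 : Multiplicative (ZMod 2) →* MulAut (Fin d → Multiplicative (ZMod (2 ^ (n + 1)))))
    (hφn1 : ∀ y, φn1 (Multiplicative.ofAdd 1) y = y⁻¹)
    (π : ((Fin d → Multiplicative (ZMod (2 ^ (n + 1)))) ⋊[φn1] Multiplicative (ZMod 2)) →*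
         ((Fin d → Multiplicative (ZMod (2 ^ n))) ⋊[φn] Multiplicative (ZMod 2)))
    (hπ : ∀ x, π x =
      ⟨fun i => Multiplicative.ofAdd
          (ZMod.castHom (pow_dvd_pow 2 (Nat.le_succ n)) (ZMod (2 ^ n)) (x.left i).toAdd),
        x.right⟩) :
    ∀ f : ((Fin d → Multiplicative (ZMod (2 ^ n))) ⋊[φn] Multiplicative (ZMod 2)) ×
          ((Fin d → Multiplicative (ZMod (2 ^ n))) ⋊[φn] Multiplicative (ZMod 2)) → ZMod 2,
      f ∈ cocycles₂
        (trivRep 2 ((Fin d → Multiplicative (ZMod (2 ^ n))) ⋊[φn] Multiplicative (ZMod 2))) →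
      ∃ (ℓ : ℕ)
        (χ ψ : Fin ℓ →
          ((Fin d → Multiplicative (ZMod (2 ^ (n + 1)))) ⋊[φn1] Multiplicative (ZMod 2)) →
            ZMod 2),
        (∀ i, (∀ a b, χ i (a * b) = χ i a + χ i b) ∧ (∀ a b, ψ i (a * b) = ψ i a + ψ i b)) ∧
        ∃ φ' : ((Fin d → Multiplicative (ZMod (2 ^ (n + 1)))) ⋊[φn1]
            Multiplicative (ZMod 2)) → ZMod 2,
          (fun x : ((Fin d → Multiplicative (ZMod (2 ^ (n + 1)))) ⋊[φn1]
                     Multiplicative (ZMod 2)) ×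
                   ((Fin d → Multiplicative (ZMod (2 ^ (n + 1)))) ⋊[φn1]
                     Multiplicative (ZMod 2)) =>
            f (π x.1, π x.2)) =
          (fun x => ∑ i, χ i x.1 * ψ i x.2) +
            (d₁₂ (trivRep 2 ((Fin d → Multiplicative (ZMod (2 ^ (n + 1)))) ⋊[φn1]
              Multiplicative (ZMod 2)))).hom φ' := by
  intro f hf
  classical
  set Ct : Stmt17P.Ctx := ⟨n, d, φn1, hφn1⟩ with hCt
  have h22 : (2 : ZMod 2) = 0 := by decide
  have hcoc := (groupCohomology.mem_cocycles₂_def (A := trivRep 2 ((Fin d → Multiplicative (ZMod (2 ^ n))) ⋊[φn] Multiplicative (ZMod 2))) f).1 hf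
  have hρ : ∀ (g : ((Fin d → Multiplicative (ZMod (2 ^ n))) ⋊[φn] Multiplicative (ZMod 2)))
      (v : ZMod 2),
      (trivRep 2 ((Fin d → Multiplicative (ZMod (2 ^ n))) ⋊[φn]
        Multiplicative (ZMod 2))).ρ g v = v := fun g v => rfl
  let c : Stmt17P.C2 Ct.G :=
    { f := fun p => f (π p.1, π p.2) + f (1, 1)
      coc := by
        intro g h k
        have h0' : f (π h, π k) - f (π (g * h), π k) + f (π g, π (h * k)) - f (π g, π h)
            = (0 : ZMod 2) := by
          have h0 := hcoc (π g) (π h) (π k)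
          rw [hρ, ← map_mul π g h, ← map_mul π h k] at h0
          exact h0
        show f (π h, π k) + f (1,1) + (f (π g, π (h * k)) + f (1,1))
          = f (π (g * h), π k) + f (1,1) + (f (π g, π h) + f (1,1))
        linear_combination h0'
      nor := by
        show f (π 1, π 1) + f (1, 1) = 0
        rw [map_one π]
        exact Stmt17P.z2_add_self _ }
  -- the crucial order relation
  have hEi : ∀ i, c.f (Ct.eG i ^ 2 ^ Ct.n, Ct.eG i ^ 2 ^ Ct.n) = 0 := by
    intro i
    have hπe : π (Ct.eG i) ^ 2 ^ n = 1 := by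
      set z := π (Ct.eG i) with hz
      have hzr : z.right = 1 := by
        rw [hz, hπ]
        rfl
      have hzz : z = SemidirectProduct.inl z.left := by
        conv_lhs => rw [← SemidirectProduct.inl_left_mul_inr_right z]
        rw [hzr, map_one, mul_one]
      rw [hzz, ← map_pow]
      have : z.left ^ 2 ^ n = 1 := by
        funext j
        rw [Pi.pow_apply, Stmt17P.mult_zmod_pow_self]
        rfl
      rw [this, map_one]
    show f (π (Ct.eG i ^ 2 ^ n), π (Ct.eG i ^ 2 ^ n)) + f (1, 1) = 0
    rw [map_pow, hπe]
    exact Stmt17P.z2_add_self _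
  -- data for the decomposition
  refine ⟨(d + 1) * (d + 1),
    fun p g => Stmt17P.ΧF Ct (finProdFinEquiv.symm p).1 g
      * Stmt17P.CF c (Stmt17P.γv Ct (finProdFinEquiv.symm p).1)
          (Stmt17P.γv Ct (finProdFinEquiv.symm p).2),
    fun p h => Stmt17P.ΧF Ct (finProdFinEquiv.symm p).2 h, ?_, ?_⟩
  · intro p
    exact ⟨fun a b => Stmt17P.chi_hom' c p a b, fun a b => Stmt17P.psi_hom' Ct p a b⟩
  · refine ⟨fun g => Stmt17P.φ0 c g + f (1, 1), ?_⟩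
    funext x
    obtain ⟨g, h⟩ := x
    simp only [Pi.add_apply]
    have hsum : (∑ i : Fin ((d + 1) * (d + 1)),
        Stmt17P.ΧF Ct (finProdFinEquiv.symm i).1 g
          * Stmt17P.CF c (Stmt17P.γv Ct (finProdFinEquiv.symm i).1)
              (Stmt17P.γv Ct (finProdFinEquiv.symm i).2)
          * Stmt17P.ΧF Ct (finProdFinEquiv.symm i).2 h) = Stmt17P.CF c g h :=
      Stmt17P.sum_expand c g h
    have hval : f (π g, π h) + f (1, 1)
        = Stmt17P.CF c g h + (Stmt17P.φ0 c g + Stmt17P.φ0 c h + Stmt17P.φ0 c (g * h)) :=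
      Stmt17P.cf_eq c hEi g h
    have hdone : ((d₁₂ (trivRep 2 ((Fin d → Multiplicative (ZMod (2 ^ (n + 1)))) ⋊[φn1]
          Multiplicative (ZMod 2)))).hom (fun g => Stmt17P.φ0 c g + f (1, 1)) (g, h) : ZMod 2)
        = (Stmt17P.φ0 c h + f (1, 1)) - (Stmt17P.φ0 c (g * h) + f (1, 1))
          + (Stmt17P.φ0 c g + f (1, 1)) := rfl
    beta_reduce
    rw [hsum, hdone]
    linear_combination hval + (Stmt17P.φ0 c (g * h) - f (1, 1)) * h22
end
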